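/- arXiv:2604.15355 — 7 statements merged into one kernel-verified Lean document; each statement's English description precedes it below -/
import Mathlib

section
/- Let M be a self-adjoint operator on a Hilbert space written as a 2×2 block operator matrix with respect to an orthogonal decomposition H = H₁ ⊕ H₂, with blocks M^(11), M^(12), M^(21), M^(22). Suppose M^(11) ≤ m₁·I, M^(22) ≤ m₂·I, and m₁ ≠ m₂. Then the top of the spectrum of M satisfies λ_max(M) ≤ max{m₁, m₂} + ‖M^(12)‖² / |m₂ − m₁|. -/
open ContinuousLinearMap

private lemma key_scalar_ineq (a b c m₁ m₂ : ℝ) (ha : 0 ≤ a) (hb : 0 ≤ b) (hc : 0 ≤ c)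
    (hm : m₁ ≠ m₂) :
    m₁ * a ^ 2 + m₂ * b ^ 2 + 2 * (c * a * b) ≤
      (max m₁ m₂ + c ^ 2 / |m₂ - m₁|) * (a ^ 2 + b ^ 2) := by
  rcases lt_or_gt_of_ne hm with h | h
  · have hd : 0 < m₂ - m₁ := by linarith
    rw [abs_of_pos hd, max_eq_right h.le]
    have h2 : c ^ 2 / (m₂ - m₁) * (m₂ - m₁) = c ^ 2 := div_mul_cancel₀ _ hd.ne'
    have h3 : 0 ≤ c ^ 2 / (m₂ - m₁) := div_nonneg (sq_nonneg c) hd.le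
    nlinarith [sq_nonneg ((m₂ - m₁) * a - c * b), mul_nonneg (mul_nonneg ha hb) hc,
      mul_nonneg h3 (sq_nonneg a)]
  · have hd : 0 < m₁ - m₂ := by linarith
    rw [abs_of_neg (by linarith : m₂ - m₁ < 0), max_eq_left h.le, neg_sub]
    have h2 : c ^ 2 / (m₁ - m₂) * (m₁ - m₂) = c ^ 2 := div_mul_cancel₀ _ hd.ne'
    have h3 : 0 ≤ c ^ 2 / (m₁ - m₂) := div_nonneg (sq_nonneg c) hd.le
    nlinarith [sq_nonneg ((m₁ - m₂) * b - c * a), mul_nonneg (mul_nonneg ha hb) hc,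
      mul_nonneg h3 (sq_nonneg b)]

/-- For a bounded self-adjoint operator `M` on a Hilbert space written as a
2×2 block operator matrix w.r.t. an orthogonal decomposition given by orthogonal projections
`P₁, P₂`, if `M^(11) ≤ m₁`, `M^(22) ≤ m₂` and `m₁ ≠ m₂`, then the top of the spectrum of `M`
is at most `max m₁ m₂ + ‖M^(12)‖² / |m₂ − m₁|`. -/
theorem stmt_0
    {E : Type*} [NormedAddCommGroup E] [InnerProductSpace ℂ E] [CompleteSpace E]
    (M P₁ P₂ : E →L[ℂ] E)
    (hM : IsSelfAdjoint M)
    (hP₁sa : IsSelfAdjoint P₁) (hP₂sa : IsSelfAdjoint P₂)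
    (hP₁idem : P₁ ∘L P₁ = P₁) (hP₂idem : P₂ ∘L P₂ = P₂)
    (hsum : P₁ + P₂ = 1) (horth : P₁ ∘L P₂ = 0)
    (m₁ m₂ : ℝ) (hm : m₁ ≠ m₂)
    (h11 : ∀ x : E, (inner ℂ ((P₁ ∘L M ∘L P₁) x) x : ℂ).re ≤ m₁ * ‖P₁ x‖ ^ 2)
    (h22 : ∀ x : E, (inner ℂ ((P₂ ∘L M ∘L P₂) x) x : ℂ).re ≤ m₂ * ‖P₂ x‖ ^ 2) :
    ∀ μ ∈ spectrum ℂ M, μ.re ≤ max m₁ m₂ + ‖P₁ ∘L M ∘L P₂‖ ^ 2 / |m₂ - m₁| := by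
  intro μ hμ
  set A : E →L[ℂ] E := P₁ ∘L M ∘L P₂ with hA
  set K : ℝ := max m₁ m₂ + ‖A‖ ^ 2 / |m₂ - m₁| with hK
  -- selfadjoint operators move across the inner product
  have hsa_inner : ∀ (T : E →L[ℂ] E), IsSelfAdjoint T → ∀ y z : E,
      (inner ℂ (T y) z : ℂ) = inner ℂ y (T z) := by
    intro T hT y z
    conv_lhs => rw [← hT.adjoint_eq]
    exact adjoint_inner_left T z y
  have hform : ∀ x : E, (inner ℂ (M x) x : ℂ).re ≤ K * ‖x‖ ^ 2 := by
    intro x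
    have hxsum : P₁ x + P₂ x = x := by
      have := congrArg (fun T : E →L[ℂ] E => T x) hsum
      simpa using this
    -- Pythagoras
    have horthx : (inner ℂ (P₁ x) (P₂ x) : ℂ) = 0 := by
      rw [hsa_inner P₁ hP₁sa]
      have h := congrArg (fun T : E →L[ℂ] E => T x) horth
      simp only [comp_apply, zero_apply] at h
      simp [h]
    have hpyth : ‖x‖ ^ 2 = ‖P₁ x‖ ^ 2 + ‖P₂ x‖ ^ 2 := by
      have hx2 : ‖x‖ ^ 2 = ‖P₁ x + P₂ x‖ ^ 2 := by rw [hxsum]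
      rw [hx2, @norm_add_sq ℂ]
      simp [horthx]
    -- block decomposition of M
    have hMdec : P₁ ∘L M ∘L P₁ + A + (P₂ ∘L M ∘L P₁ + P₂ ∘L M ∘L P₂) = M := by
      have h1 : (P₁ + P₂) ∘L M ∘L (P₁ + P₂) = M := by
        rw [hsum]
        ext y; simp
      rw [hA]
      conv_rhs => rw [← h1]
      simp only [comp_add, add_comp]
      abel
    -- cross term identification
    have hcross : (inner ℂ ((P₂ ∘L M ∘L P₁) x) x : ℂ).re = (inner ℂ (A x) x : ℂ).re := by
      have : (inner ℂ ((P₂ ∘L M ∘L P₁) x) x : ℂ) = inner ℂ x (A x) := by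
        simp only [comp_apply]
        rw [hsa_inner P₂ hP₂sa, hsa_inner M hM, hsa_inner P₁ hP₁sa]
        simp [hA, comp_apply]
      rw [this, ← inner_conj_symm]
      exact Complex.conj_re _
    -- cross term bound
    have hAx : A x = A (P₂ x) := by
      have h := congrArg (fun T : E →L[ℂ] E => T x) hP₂idem
      simp only [comp_apply] at h
      simp [hA, comp_apply, h]
    have hP1A : P₁ (A x) = A x := by
      have h := congrArg (fun T : E →L[ℂ] E => T (M (P₂ x))) hP₁idem
      simp only [comp_apply] at h
      simp [hA, comp_apply, h]
    have hcrossbound : (inner ℂ (A x) x : ℂ).re ≤ ‖A‖ * ‖P₁ x‖ * ‖P₂ x‖ := by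
      have h1 : (inner ℂ (A x) x : ℂ) = inner ℂ (A (P₂ x)) (P₁ x) := by
        conv_lhs => rw [← hP1A]
        rw [hsa_inner P₁ hP₁sa, hAx]
      calc (inner ℂ (A x) x : ℂ).re ≤ ‖(inner ℂ (A x) x : ℂ)‖ := Complex.re_le_norm _
        _ = ‖(inner ℂ (A (P₂ x)) (P₁ x) : ℂ)‖ := by rw [h1]
        _ ≤ ‖A (P₂ x)‖ * ‖P₁ x‖ := norm_inner_le_norm _ _
        _ ≤ (‖A‖ * ‖P₂ x‖) * ‖P₁ x‖ := by
            gcongr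
            exact A.le_opNorm _
        _ = ‖A‖ * ‖P₁ x‖ * ‖P₂ x‖ := by ring
    -- combine
    have hsplit : (inner ℂ (M x) x : ℂ).re =
        (inner ℂ ((P₁ ∘L M ∘L P₁) x) x : ℂ).re + (inner ℂ (A x) x : ℂ).re +
        ((inner ℂ ((P₂ ∘L M ∘L P₁) x) x : ℂ).re + (inner ℂ ((P₂ ∘L M ∘L P₂) x) x : ℂ).re) := by
      conv_lhs => rw [← hMdec]
      simp [add_apply, inner_add_left]
    rw [hsplit, hcross, hpyth, hK]
    have := key_scalar_ineq ‖P₁ x‖ ‖P₂ x‖ ‖A‖ m₁ m₂ (norm_nonneg _) (norm_nonneg _)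
      (norm_nonneg _) hm
    have h1 := h11 x
    have h2 := h22 x
    nlinarith [hcrossbound]
  -- positivity of K - M
  have hpos : (0 : E →L[ℂ] E) ≤ algebraMap ℝ (E →L[ℂ] E) K - M := by
    rw [nonneg_iff_isPositive]
    constructor
    · exact ((IsSelfAdjoint.all K).algebraMap _ |>.sub hM).isSymmetric
    · intro x
      have halg : (algebraMap ℝ (E →L[ℂ] E) K) x = (K : ℂ) • x := by
        rw [Algebra.algebraMap_eq_smul_one]
        simp only [coe_smul', Pi.smul_apply, one_apply]
        exact RCLike.real_smul_eq_coe_smul K x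
      have hKx : (inner ℂ ((algebraMap ℝ (E →L[ℂ] E) K) x) x : ℂ).re = K * ‖x‖ ^ 2 := by
        rw [halg, inner_smul_left, Complex.conj_ofReal, Complex.re_ofReal_mul]
        have h5 : RCLike.re (inner ℂ x x : ℂ) = ‖x‖ ^ 2 := inner_self_eq_norm_sq x
        rw [RCLike.re_to_complex] at h5
        rw [h5]
      rw [reApplyInnerSelf_apply]
      simp only [RCLike.re_to_complex, sub_apply, inner_sub_left, Complex.sub_re]
      rw [hKx]
      linarith [hform x]
  -- spectral conclusion
  have hμre : μ = (μ.re : ℂ) := hM.mem_spectrum_eq_re hμ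
  have h1 : μ.re ∈ spectrum ℝ M := by
    rw [← spectrum.algebraMap_mem_iff ℂ]
    rw [hμre] at hμ
    simpa [Complex.coe_algebraMap] using hμ
  have h2 : K - μ.re ∈ spectrum ℝ (algebraMap ℝ (E →L[ℂ] E) K - M) := by
    rw [← spectrum.singleton_sub_eq]
    exact Set.sub_mem_sub rfl h1
  have h3 : 0 ≤ K - μ.re := spectrum_nonneg_of_nonneg hpos h2
  linarith
end

section
/- Let M be a self-adjoint operator on H = H₁ ⊕ H₂ with blocks M^(αβ). Assume that for some λ* ∈ ℝ one has M^(11) ≤ m₁·I with m₁ < λ*, and that for every λ > λ* the operator M^(22) − λ − M^(21)(M^(11) − λ)^{-1}M^(12) is invertible with a negative upper bound (i.e., is ≤ −c(λ)·I for some c(λ) > 0). Then M − λ is invertible for every λ > λ*, hence λ_max(M) ≤ λ*. -/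
open ContinuousLinearMap

/-- A coercive bounded operator on a complex Hilbert space is invertible (Lax–Milgram). -/
lemma coercive_isUnit
    {E : Type*} [NormedAddCommGroup E] [InnerProductSpace ℂ E] [CompleteSpace E]
    (T : E →L[ℂ] E) (c : ℝ) (hc : 0 < c)
    (h : ∀ x : E, c * ‖x‖ ^ 2 ≤ (inner ℂ (T x) x : ℂ).re) : IsUnit T := by
  have hbdd : ∀ x : E, c * ‖x‖ ≤ ‖T x‖ := by
    intro x
    rcases eq_or_ne x 0 with rfl | hx
    · simp
    have h1 : c * ‖x‖ ^ 2 ≤ ‖T x‖ * ‖x‖ := by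
      calc c * ‖x‖ ^ 2 ≤ (inner ℂ (T x) x : ℂ).re := h x
        _ ≤ ‖(inner ℂ (T x) x : ℂ)‖ := Complex.re_le_norm _
        _ ≤ ‖T x‖ * ‖x‖ := norm_inner_le_norm _ _
    have hxpos : (0 : ℝ) < ‖x‖ := norm_pos_iff.mpr hx
    have := le_of_mul_le_mul_right (by nlinarith : (c * ‖x‖) * ‖x‖ ≤ ‖T x‖ * ‖x‖) hxpos
    exact this
  have hanti : AntilipschitzWith (c.toNNReal)⁻¹ T := by
    apply T.antilipschitz_of_bound
    intro x
    rw [NNReal.coe_inv, Real.coe_toNNReal _ hc.le, ← div_eq_inv_mul, le_div_iff₀ hc]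
    calc ‖x‖ * c = c * ‖x‖ := mul_comm _ _
      _ ≤ ‖T x‖ := hbdd x
  have hinj : LinearMap.ker (T : E →ₗ[ℂ] E) = ⊥ := by
    rw [LinearMap.ker_eq_bot']
    intro m hm
    exact hanti.injective (by simpa using hm)
  have hclosed : IsClosed (Set.range T) := hanti.isClosed_range T.uniformContinuous
  have hclosed' : IsClosed ((LinearMap.range (T : E →ₗ[ℂ] E) : Submodule ℂ E) : Set E) := by
    simpa [LinearMap.coe_range] using hclosed
  haveI : CompleteSpace (LinearMap.range (T : E →ₗ[ℂ] E) : Submodule ℂ E) := hclosed'.completeSpace_coe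
  have hsurj : LinearMap.range (T : E →ₗ[ℂ] E) = ⊤ := by
    rw [← Submodule.orthogonal_eq_bot_iff]
    rw [Submodule.eq_bot_iff]
    intro y hy
    have h0 : (inner ℂ (T y) y : ℂ) = 0 := by
      have := hy (T y) (LinearMap.mem_range_self _ y)
      -- hy : ∀ u ∈ range T, ⟪u, y⟫ = 0
      simpa [inner_eq_zero_symm] using this
    have := h y
    rw [h0] at this
    simp only [Complex.zero_re] at this
    have hy0 : ‖y‖ ^ 2 ≤ 0 := by nlinarith
    have : ‖y‖ = 0 := by nlinarith [sq_nonneg ‖y‖, norm_nonneg y]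
    exact norm_eq_zero.mp this
  let e := ContinuousLinearEquiv.ofBijective T hinj hsurj
  have he : (e : E →L[ℂ] E) = T := ContinuousLinearEquiv.coe_ofBijective _ _ _
  refine ⟨⟨T, (e.symm : E →L[ℂ] E), ?_, ?_⟩, rfl⟩
  · ext x; simp [← he]
  · ext x; simp [← he]

/-- Schur complement criterion, Proposition 3.2 of the paper:
for a bounded self-adjoint block operator `M` on `H = H₁ ⊕ H₂`, if `M^(11) ≤ m₁ < λ*` and for
every `λ > λ*` the Schur complement `M^(22) − λ − M^(21)(M^(11) − λ)⁻¹ M^(12)` has a negative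
upper bound, then `M − λ` is invertible for every `λ > λ*`; hence `λ_max(M) ≤ λ*`. -/
theorem stmt_1
    {E : Type*} [NormedAddCommGroup E] [InnerProductSpace ℂ E] [CompleteSpace E]
    (M P₁ P₂ : E →L[ℂ] E)
    (hM : IsSelfAdjoint M)
    (hP₁sa : IsSelfAdjoint P₁) (hP₂sa : IsSelfAdjoint P₂)
    (hP₁idem : P₁ ∘L P₁ = P₁) (hP₂idem : P₂ ∘L P₂ = P₂)
    (hsum : P₁ + P₂ = 1) (horth : P₁ ∘L P₂ = 0)
    (lamStar m₁ : ℝ) (hm₁ : m₁ < lamStar)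
    (h11 : ∀ x : E, (inner ℂ ((P₁ ∘L M ∘L P₁) x) x : ℂ).re ≤ m₁ * ‖P₁ x‖ ^ 2)
    (hschur : ∀ l : ℝ, lamStar < l →
      ∃ R : E →L[ℂ] E,
        P₁ ∘L R ∘L P₁ = R ∧
        R ∘L (P₁ ∘L M ∘L P₁ - (l : ℂ) • P₁) = P₁ ∧
        (P₁ ∘L M ∘L P₁ - (l : ℂ) • P₁) ∘L R = P₁ ∧
        ∃ c : ℝ, 0 < c ∧ ∀ x : E,
          (inner ℂ ((P₂ ∘L M ∘L P₂ - (l : ℂ) • P₂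
              - (P₂ ∘L M ∘L P₁) ∘L R ∘L (P₁ ∘L M ∘L P₂)) x) x : ℂ).re
            ≤ -c * ‖P₂ x‖ ^ 2) :
    (∀ l : ℝ, lamStar < l → (l : ℂ) ∉ spectrum ℂ M) ∧
    (∀ μ ∈ spectrum ℂ M, μ.re ≤ lamStar) := by
  -- basic projection algebra, in terms of `*`
  have p1p2 : P₁ * P₂ = 0 := horth
  have p2p1 : P₂ * P₁ = 0 := by
    have : star (P₁ * P₂) = star (0 : E →L[ℂ] E) := congrArg star horth
    simpa [star_mul, hP₁sa.star_eq, hP₂sa.star_eq] using this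
  have p1p1 : P₁ * P₁ = P₁ := hP₁idem
  have p2p2 : P₂ * P₂ = P₂ := hP₂idem
  -- key orthogonality facts for quadratic forms
  have hx12 : ∀ x : E, (inner ℂ (P₁ x) (P₂ x) : ℂ) = 0 := by
    intro x
    have : (inner ℂ (P₁ x) (P₂ x) : ℂ) = inner ℂ x ((P₁ ∘L P₂) x) := by
      conv_rhs => rw [comp_apply, ← ContinuousLinearMap.adjoint_inner_left P₁]
      rw [hP₁sa.adjoint_eq]
    rw [this, horth]
    simp
  have hxsum : ∀ x : E, P₁ x + P₂ x = x := by
    intro x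
    have := congrArg (fun f : E →L[ℂ] E => f x) hsum
    simpa using this
  have hnorm : ∀ x : E, ‖x‖ ^ 2 = ‖P₁ x‖ ^ 2 + ‖P₂ x‖ ^ 2 := by
    intro x
    have h2 := norm_add_sq (𝕜 := ℂ) (P₁ x) (P₂ x)
    rw [hxsum x] at h2
    rw [h2, hx12 x]
    simp
  have hP1quad : ∀ x : E, (inner ℂ (P₁ x) x : ℂ).re = ‖P₁ x‖ ^ 2 := by
    intro x
    have h3 : (inner ℂ (P₁ x) x : ℂ) = inner ℂ (P₁ x) (P₁ x) + inner ℂ (P₁ x) (P₂ x) := by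
      rw [← inner_add_right, hxsum x]
    rw [h3, hx12 x, add_zero, inner_self_eq_norm_sq_to_K]
    norm_cast
  -- main invertibility claim
  have main : ∀ l : ℝ, lamStar < l → IsUnit ((l : ℂ) • (1 : E →L[ℂ] E) - M) := by
    intro l hl
    obtain ⟨R, hRP, hRA, hAR, c, hc, hS⟩ := hschur l hl
    simp only [← ContinuousLinearMap.mul_def, ← mul_assoc] at hRP hRA hAR hS
    set A : E →L[ℂ] E := P₁ * M * P₁ - (l : ℂ) • P₁ with hA
    set B : E →L[ℂ] E := P₂ * M * P₁ with hB
    set Cc : E →L[ℂ] E := P₁ * M * P₂ with hC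
    set D : E →L[ℂ] E := P₂ * M * P₂ - (l : ℂ) • P₂ with hD
    set S : E →L[ℂ] E := D - B * R * Cc with hSdef
    have hRP' : P₁ * R * P₁ = R := hRP
    have hRA' : R * A = P₁ := hRA
    have hAR' : A * R = P₁ := hAR
    have hRp2 : R * P₂ = 0 := by
      calc R * P₂ = (P₁ * R * P₁) * P₂ := by rw [hRP']
        _ = P₁ * R * (P₁ * P₂) := by noncomm_ring
        _ = 0 := by rw [p1p2]; noncomm_ring
    have hp2R : P₂ * R = 0 := by
      calc P₂ * R = P₂ * (P₁ * R * P₁) := by rw [hRP']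
        _ = (P₂ * P₁) * (R * P₁) := by noncomm_ring
        _ = 0 := by rw [p2p1]; noncomm_ring
    have hRS : R * S = 0 := by
      have h1 : R * D = 0 := by
        rw [hD, mul_sub, mul_smul_comm, hRp2]
        have : R * (P₂ * M * P₂) = (R * P₂) * (M * P₂) := by noncomm_ring
        rw [this, hRp2]; simp
      have h2 : R * B = 0 := by
        rw [hB]
        have : R * (P₂ * M * P₁) = (R * P₂) * (M * P₁) := by noncomm_ring
        rw [this, hRp2]; simp
      rw [hSdef, mul_sub, h1]
      have : R * (B * R * Cc) = (R * B) * (R * Cc) := by noncomm_ring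
      rw [this, h2]; simp
    have hSR : S * R = 0 := by
      have h1 : D * R = 0 := by
        rw [hD, sub_mul, smul_mul_assoc, hp2R]
        have : P₂ * M * P₂ * R = (P₂ * M) * (P₂ * R) := by noncomm_ring
        rw [this, hp2R]; simp
      have h2 : Cc * R = 0 := by
        rw [hC]
        have : P₁ * M * P₂ * R = (P₁ * M) * (P₂ * R) := by noncomm_ring
        rw [this, hp2R]; simp
      rw [hSdef, sub_mul, h1]
      have : B * R * Cc * R = (B * R) * (Cc * R) := by noncomm_ring
      rw [this, h2]; simp
    have hBRsq : (B * R) * (B * R) = 0 := by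
      have hRB : R * B = 0 := by
        rw [hB]
        have : R * (P₂ * M * P₁) = (R * P₂) * (M * P₁) := by noncomm_ring
        rw [this, hRp2]; simp
      calc (B * R) * (B * R) = B * (R * B) * R := by noncomm_ring
        _ = 0 := by rw [hRB]; simp
    have hRCsq : (R * Cc) * (R * Cc) = 0 := by
      have hCR : Cc * R = 0 := by
        rw [hC]
        have : P₁ * M * P₂ * R = (P₁ * M) * (P₂ * R) := by noncomm_ring
        rw [this, hp2R]; simp
      calc (R * Cc) * (R * Cc) = R * (Cc * R) * Cc := by noncomm_ring
        _ = 0 := by rw [hCR]; simp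
    -- units
    have hU : IsUnit (1 + B * R) := by
      refine ⟨⟨1 + B * R, 1 - B * R, ?_, ?_⟩, rfl⟩
      · have : (1 + B * R) * (1 - B * R) = 1 + B * R - B * R - (B * R) * (B * R) := by noncomm_ring
        rw [this, hBRsq]; noncomm_ring
      · have : (1 - B * R) * (1 + B * R) = 1 + B * R - B * R - (B * R) * (B * R) := by noncomm_ring
        rw [this, hBRsq]; noncomm_ring
    have hV : IsUnit (1 + R * Cc) := by
      refine ⟨⟨1 + R * Cc, 1 - R * Cc, ?_, ?_⟩, rfl⟩
      · have : (1 + R * Cc) * (1 - R * Cc) = 1 + R * Cc - R * Cc - (R * Cc) * (R * Cc) := by noncomm_ring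
        rw [this, hRCsq]; noncomm_ring
      · have : (1 - R * Cc) * (1 + R * Cc) = 1 + R * Cc - R * Cc - (R * Cc) * (R * Cc) := by noncomm_ring
        rw [this, hRCsq]; noncomm_ring
    -- the middle factor is minus a coercive operator
    have hTunit : IsUnit (A + S) := by
      have hneg : IsUnit (-(A + S)) := by
        apply coercive_isUnit (-(A + S)) (min (l - m₁) c)
          (lt_min (by linarith) hc)
        intro x
        have hAx : (inner ℂ (A x) x : ℂ).re ≤ (m₁ - l) * ‖P₁ x‖ ^ 2 := by
          have hthis : (inner ℂ (A x) x : ℂ) =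
              inner ℂ ((P₁ * M * P₁) x) x - (l : ℂ) * inner ℂ (P₁ x) x := by
            rw [hA, ContinuousLinearMap.sub_apply, ContinuousLinearMap.smul_apply,
              inner_sub_left, inner_smul_left, Complex.conj_ofReal]
          rw [hthis]
          have hre : ((l : ℂ) * inner ℂ (P₁ x) x).re = l * ‖P₁ x‖ ^ 2 := by
            rw [Complex.re_ofReal_mul, hP1quad x]
          rw [Complex.sub_re, hre]
          have h11' := h11 x
          simp only [← ContinuousLinearMap.mul_def, ← mul_assoc] at h11'
          linarith
        have hSop : S = D - B * R * P₁ * M * P₂ := by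
          rw [hSdef, hC]; noncomm_ring
        have hSx : (inner ℂ (S x) x : ℂ).re ≤ -c * ‖P₂ x‖ ^ 2 := by
          rw [hSop]; exact hS x
        have hsum' : (inner ℂ ((A + S) x) x : ℂ).re ≤ (m₁ - l) * ‖P₁ x‖ ^ 2 + (-c * ‖P₂ x‖ ^ 2) := by
          rw [ContinuousLinearMap.add_apply, inner_add_left, Complex.add_re]
          exact add_le_add hAx hSx
        have hneg' : (inner ℂ ((-(A + S)) x) x : ℂ).re = -(inner ℂ ((A + S) x) x : ℂ).re := by
          rw [ContinuousLinearMap.neg_apply, inner_neg_left, Complex.neg_re]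
        rw [hneg']
        have hmin1 : min (l - m₁) c ≤ l - m₁ := min_le_left _ _
        have hmin2 : min (l - m₁) c ≤ c := min_le_right _ _
        have := hnorm x
        nlinarith [sq_nonneg ‖P₁ x‖, sq_nonneg ‖P₂ x‖]
      have := hneg.neg
      simpa using this
    -- factorization
    have hfact : (1 + B * R) * (A + S) * (1 + R * Cc) = M - (l : ℂ) • 1 := by
      have hP1C : P₁ * Cc = Cc := by
        rw [hC]
        calc P₁ * (P₁ * M * P₂) = (P₁ * P₁) * M * P₂ := by noncomm_ring
          _ = Cc := by rw [p1p1, hC]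
      have hBP1 : B * P₁ = B := by
        rw [hB]
        calc (P₂ * M * P₁) * P₁ = P₂ * M * (P₁ * P₁) := by noncomm_ring
          _ = B := by rw [p1p1, hB]
      have e1 : (A + S) * (1 + R * Cc) = A + S + Cc := by
        rw [add_mul, mul_add, mul_add]
        have hArc : A * (R * Cc) = Cc := by
          calc A * (R * Cc) = (A * R) * Cc := by noncomm_ring
            _ = Cc := by rw [hAR', hP1C]
        have hSrc : S * (R * Cc) = 0 := by
          calc S * (R * Cc) = (S * R) * Cc := by noncomm_ring
            _ = 0 := by rw [hSR]; simp
        rw [hArc, hSrc]; noncomm_ring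
      have e2 : (1 + B * R) * (A + S + Cc) = A + S + Cc + B + B * R * Cc := by
        have hbra : (B * R) * A = B := by
          calc (B * R) * A = B * (R * A) := by noncomm_ring
            _ = B := by rw [hRA', hBP1]
        have hbrs : (B * R) * S = 0 := by
          calc (B * R) * S = B * (R * S) := by noncomm_ring
            _ = 0 := by rw [hRS]; simp
        have expand : (1 + B * R) * (A + S + Cc)
            = A + S + Cc + ((B * R) * A + (B * R) * S + (B * R) * Cc) := by noncomm_ring
        rw [expand, hbra, hbrs]
        noncomm_ring
      have e3 : A + S + Cc + B + B * R * Cc = M - (l : ℂ) • 1 := by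
        have hMexp : M = P₁ * M * P₁ + P₁ * M * P₂ + P₂ * M * P₁ + P₂ * M * P₂ := by
          have h4 : M = (P₁ + P₂) * M * (P₁ + P₂) := by rw [hsum]; noncomm_ring
          conv_lhs => rw [h4]
          noncomm_ring
        have hid : ((l : ℂ)) • (1 : E →L[ℂ] E) = (l : ℂ) • P₁ + (l : ℂ) • P₂ := by
          rw [← smul_add, hsum]
        conv_rhs => rw [hMexp, hid]
        rw [hSdef, hA, hB, hC, hD]
        abel
      calc (1 + B * R) * (A + S) * (1 + R * Cc)
          = (1 + B * R) * ((A + S) * (1 + R * Cc)) := by rw [mul_assoc]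
        _ = (1 + B * R) * (A + S + Cc) := by rw [e1]
        _ = A + S + Cc + B + B * R * Cc := e2
        _ = M - (l : ℂ) • 1 := e3
    have : IsUnit (M - (l : ℂ) • 1) := by
      rw [← hfact]
      exact (hU.mul hTunit).mul hV
    have := this.neg
    simpa [neg_sub] using this
  have part1 : ∀ l : ℝ, lamStar < l → (l : ℂ) ∉ spectrum ℂ M := by
    intro l hl hmem
    rw [spectrum.mem_iff] at hmem
    exact hmem (by simpa [Algebra.algebraMap_eq_smul_one] using main l hl)
  refine ⟨part1, ?_⟩
  intro μ hμ
  by_contra hlt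
  push_neg at hlt
  have hre : μ = (μ.re : ℂ) := hM.mem_spectrum_eq_re hμ
  exact part1 μ.re hlt (hre ▸ hμ)
end

section
/- Let M be a bounded self-adjoint operator on a Hilbert space, with an orthogonal decomposition into finitely or countably many subspaces with projections P_k, and suppose M_{jk} := P_j M P_k = 0 whenever |j − k| > p₀. Let D = diag{M_{kk}} restricted to indices N₀ < k ≤ N₁, suppose D ≤ −C₁ < 0 on that range and ‖M^(11) − D‖ ≤ qC₁/2 with 0 < q < 1, where M^(11) is the block of M on indices N₀ < k ≤ N₁. Then for every z > −C₁/2 the resolvent (M^(11) − z)^{-1} exists and its blocks satisfy ‖((M^(11) − z)^{-1})_{jk}‖ ≤ 2(C₁(1 − q))^{-1} q^{|j−k|/p₀}. -/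
open ContinuousLinearMap

/-- A (not necessarily self-adjoint) operator with a strictly negative quadratic form
is invertible. -/
lemma stmt2_aux_inv {E : Type*} [NormedAddCommGroup E] [InnerProductSpace ℂ E] [CompleteSpace E]
    (T : E →L[ℂ] E) (c : ℝ) (hc : 0 < c)
    (hcoer : ∀ x : E, (inner ℂ (T x) x : ℂ).re ≤ -c * ‖x‖ ^ 2) :
    ∃ S : E →L[ℂ] E, S * T = 1 ∧ T * S = 1 := by
  have hlow : ∀ x : E, c * ‖x‖ ≤ ‖T x‖ := by
    intro x
    rcases eq_or_ne x 0 with rfl | hx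
    · simp
    have h1 : c * ‖x‖ ^ 2 ≤ ‖(inner ℂ (T x) x : ℂ)‖ := by
      have := hcoer x
      calc c * ‖x‖ ^ 2 ≤ -(inner ℂ (T x) x : ℂ).re := by linarith
        _ ≤ |(inner ℂ (T x) x : ℂ).re| := neg_le_abs _
        _ ≤ ‖(inner ℂ (T x) x : ℂ)‖ := Complex.abs_re_le_norm _
    have h3 : ‖(inner ℂ (T x) x : ℂ)‖ ≤ ‖T x‖ * ‖x‖ := norm_inner_le_norm _ _
    have hxpos : 0 < ‖x‖ := norm_pos_iff.mpr hx
    nlinarith [sq_nonneg (‖x‖)]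
  have hanti : AntilipschitzWith (Real.toNNReal c)⁻¹ T := by
    refine AddMonoidHomClass.antilipschitz_of_bound T fun x => ?_
    rw [NNReal.coe_inv, Real.coe_toNNReal _ hc.le, inv_mul_eq_div, le_div_iff₀ hc]
    simpa [mul_comm] using hlow x
  have hinj : LinearMap.ker T = ⊥ := LinearMap.ker_eq_bot.mpr (by exact hanti.injective)
  have hclosed : IsClosed (Set.range T) := hanti.isClosed_range T.uniformContinuous
  have hsurj : LinearMap.range (T : E →ₗ[ℂ] E) = ⊤ := by
    have : IsClosed ((LinearMap.range (T : E →ₗ[ℂ] E) : Submodule ℂ E) : Set E) := hclosed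
    have inst : CompleteSpace (LinearMap.range (T : E →ₗ[ℂ] E) : Submodule ℂ E) := this.completeSpace_coe
    rw [← Submodule.orthogonal_eq_bot_iff, Submodule.eq_bot_iff]
    intro y hy
    have h0 : (inner ℂ (T y) y : ℂ) = 0 :=
      (Submodule.mem_orthogonal _ y).mp hy (T y) (LinearMap.mem_range_self _ y)
    have := hcoer y
    rw [h0] at this
    simp only [Complex.zero_re] at this
    have h2 : ‖y‖ ^ 2 ≤ 0 := by nlinarith
    have h3 : ‖y‖ ^ 2 = 0 := le_antisymm h2 (sq_nonneg _)
    have h1 : ‖y‖ = 0 := by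
      exact pow_eq_zero_iff (M₀ := ℝ) (n := 2) (by norm_num) |>.mp h3
    simpa using h1
  let e := ContinuousLinearEquiv.ofBijective T hinj hsurj
  refine ⟨e.symm.toContinuousLinearMap, ?_, ?_⟩
  · ext x; simp [ContinuousLinearMap.mul_apply, e]
  · ext x; simp [ContinuousLinearMap.mul_apply, e]

set_option maxHeartbeats 1000000 in
/-- off-diagonal resolvent decay for a banded block operator, step (3.6) of
Proposition 3.1: if `M` is self-adjoint and banded of width `p₀` with respect to a countable
orthogonal block decomposition, `D` is the block diagonal of `M^(11)` (the block of `M` on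
indices `N₀ < k ≤ N₁`) with `D ≤ −C₁ < 0` and `‖M^(11) − D‖ ≤ qC₁/2`, `0 < q < 1`, then for
every `z > −C₁/2` the resolvent `(M^(11) − z)⁻¹` exists (on the corresponding subspace) and its
blocks decay exponentially: `‖((M^(11) − z)⁻¹)_{jk}‖ ≤ 2(C₁(1 − q))⁻¹ q^{|j−k|/p₀}`. -/
theorem stmt_2
    {E : Type*} [NormedAddCommGroup E] [InnerProductSpace ℂ E] [CompleteSpace E]
    (M : E →L[ℂ] E) (hM : IsSelfAdjoint M) (hMnorm : ∃ C : ℝ, ‖M‖ ≤ C)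
    (P : ℕ → E →L[ℂ] E)
    (hPsa : ∀ k, IsSelfAdjoint (P k)) (hPidem : ∀ k, P k ∘L P k = P k)
    (hPorth : ∀ j k, j ≠ k → P j ∘L P k = 0)
    (hPsum : ∀ x : E, HasSum (fun k => P k x) x)
    (p₀ N₀ N₁ : ℕ) (hp₀ : 0 < p₀)
    (hband : ∀ j k : ℕ, (p₀ : ℤ) < |(j : ℤ) - (k : ℤ)| → P j ∘L M ∘L P k = 0)
    (C₁ q : ℝ) (hC₁ : 0 < C₁) (hq0 : 0 < q) (hq1 : q < 1)
    (Q M11 D : E →L[ℂ] E)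
    (hQ : Q = ∑ k ∈ Finset.Ioc N₀ N₁, P k)
    (hM11 : M11 = Q ∘L M ∘L Q)
    (hD : D = ∑ k ∈ Finset.Ioc N₀ N₁, P k ∘L M ∘L P k)
    (hDneg : ∀ k ∈ Finset.Ioc N₀ N₁, ∀ x : E,
      (inner ℂ ((P k ∘L M ∘L P k) x) x : ℂ).re ≤ -C₁ * ‖P k x‖ ^ 2)
    (hclose : ‖M11 - D‖ ≤ q * C₁ / 2) :
    ∀ z : ℝ, -C₁ / 2 < z →
      ∃ R : E →L[ℂ] E,
        Q ∘L R ∘L Q = R ∧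
        R ∘L (M11 - (z : ℂ) • Q) = Q ∧
        (M11 - (z : ℂ) • Q) ∘L R = Q ∧
        ∀ j ∈ Finset.Ioc N₀ N₁, ∀ k ∈ Finset.Ioc N₀ N₁,
          ‖P j ∘L R ∘L P k‖
            ≤ 2 / (C₁ * (1 - q)) * q ^ (((|(j : ℤ) - (k : ℤ)| : ℤ) : ℝ) / (p₀ : ℝ)) := by
  intro z hz
  set I := Finset.Ioc N₀ N₁ with hI
  -- symmetry of P k
  have hPsym : ∀ k (x y : E), (inner ℂ (P k x) y : ℂ) = inner ℂ x (P k y) := by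
    intro k x y
    conv_lhs => rw [← (hPsa k).adjoint_eq]
    exact ContinuousLinearMap.adjoint_inner_left _ _ _
  have hPmul : ∀ j k, P j * P k = if j = k then P k else 0 := by
    intro j k
    by_cases h : j = k
    · subst h; rw [if_pos rfl]; exact hPidem j
    · rw [if_neg h]; exact hPorth j k h
  -- ⟪P k x, x⟫ = ‖P k x‖ ^ 2
  have hPinner : ∀ k (x : E), (inner ℂ (P k x) x : ℂ) = ((‖P k x‖ ^ 2 : ℝ) : ℂ) := by
    intro k x
    have h1 : P k x = P k (P k x) := by
      conv_lhs => rw [← hPidem k]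
      rfl
    calc (inner ℂ (P k x) x : ℂ) = inner ℂ (P k (P k x)) x := by rw [← h1]
      _ = inner ℂ (P k x) (P k x) := (hPsym k (P k x) x).symm ▸ by rw [hPsym]
      _ = ((‖P k x‖ ^ 2 : ℝ) : ℂ) := by
          rw [inner_self_eq_norm_sq_to_K]; norm_cast
  -- Parseval inequality
  have hparsum : ∀ x : E, HasSum (fun k => ‖P k x‖ ^ 2) (‖x‖ ^ 2) := by
    intro x
    have h1 : HasSum (fun k => (inner ℂ x (P k x) : ℂ)) (inner ℂ x x : ℂ) :=
      (hPsum x).mapL (innerSL ℂ x)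
    have h2 : HasSum (fun k => (inner ℂ x (P k x) : ℂ).re) ((inner ℂ x x : ℂ)).re :=
      h1.mapL Complex.reCLM
    have h3 : ∀ k, (inner ℂ x (P k x) : ℂ).re = ‖P k x‖ ^ 2 := by
      intro k
      rw [← hPsym, hPinner, Complex.ofReal_re]
    have h4 : ((inner ℂ x x : ℂ)).re = ‖x‖ ^ 2 := by
      rw [← RCLike.re_to_complex, inner_self_eq_norm_sq]
    rw [h4] at h2; simpa [h3] using h2
  have hpar : ∀ x : E, ∑ k ∈ I, ‖P k x‖ ^ 2 ≤ ‖x‖ ^ 2 := fun x =>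
    sum_le_hasSum I (fun k _ => sq_nonneg _) (hparsum x)
  -- basic multiplicative facts
  have hPQ : ∀ k, P k * Q = if k ∈ I then P k else 0 := by
    intro k
    rw [hQ, Finset.mul_sum]
    simp_rw [hPmul]
    exact Finset.sum_ite_eq I k (fun m => P m)
  have hQP : ∀ k, Q * P k = if k ∈ I then P k else 0 := by
    intro k
    rw [hQ, Finset.sum_mul]
    have : ∀ m, P m * P k = if m = k then P m else 0 := by
      intro m; rw [hPmul]; by_cases h : m = k <;> simp [h]
    simp_rw [this]
    exact Finset.sum_ite_eq' I k (fun m => P m)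
  have hQ2 : Q * Q = Q := by
    nth_rewrite 2 [hQ]
    rw [Finset.mul_sum]
    have h : ∑ k ∈ I, Q * P k = ∑ k ∈ I, P k :=
      Finset.sum_congr rfl fun k hk => by rw [hQP, if_pos hk]
    rw [h, ← hQ]
  have hQsym : ∀ x y : E, (inner ℂ (Q x) y : ℂ) = inner ℂ x (Q y) := by
    intro x y
    rw [hQ]
    simp only [ContinuousLinearMap.sum_apply, sum_inner, inner_sum]
    exact Finset.sum_congr rfl fun k _ => hPsym k x y
  -- norm bound for self-adjoint idempotents
  have hproj : ∀ A : E →L[ℂ] E, (∀ x y : E, (inner ℂ (A x) y : ℂ) = inner ℂ x (A y)) →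
      A * A = A → ∀ x : E, ‖A x‖ ≤ ‖x‖ := by
    intro A hsym hidem x
    rcases eq_or_ne (A x) 0 with h | h
    · simp [h]
    have hAA : A (A x) = A x := by
      have h := congrArg (fun T : E →L[ℂ] E => T x) hidem
      simpa [ContinuousLinearMap.mul_apply] using h
    have h1 : (‖A x‖ : ℝ) ^ 2 = (inner ℂ (A x) (A x) : ℂ).re := by
      rw [← RCLike.re_to_complex, inner_self_eq_norm_sq]
    have h2 : (inner ℂ (A x) (A x) : ℂ) = inner ℂ x (A x) := by
      rw [hsym x (A x), hAA]
    have h3 : (inner ℂ x (A x) : ℂ).re ≤ ‖x‖ * ‖A x‖ := by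
      calc (inner ℂ x (A x) : ℂ).re ≤ |(inner ℂ x (A x) : ℂ).re| := le_abs_self _
        _ ≤ ‖(inner ℂ x (A x) : ℂ)‖ := Complex.abs_re_le_norm _
        _ ≤ ‖x‖ * ‖A x‖ := norm_inner_le_norm _ _
    have hpos : 0 < ‖A x‖ := norm_pos_iff.mpr h
    nlinarith [h1, h2 ▸ h1]
  have hQnorm1 : ∀ x : E, ‖Q x‖ ≤ ‖x‖ := hproj Q hQsym hQ2
  have hPnorm1 : ∀ k (x : E), ‖P k x‖ ≤ ‖x‖ := by
    intro k
    exact hproj (P k) (hPsym k) (by simpa [ContinuousLinearMap.mul_def] using hPidem k)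
  have hQre : ∀ x : E, (inner ℂ (Q x) x : ℂ).re = ∑ k ∈ I, ‖P k x‖ ^ 2 := by
    intro x
    rw [hQ]
    simp only [ContinuousLinearMap.sum_apply, sum_inner, Complex.re_sum]
    refine Finset.sum_congr rfl fun k _ => ?_
    rw [hPinner, Complex.ofReal_re]
  -- the shifted diagonal operator
  set D' : E →L[ℂ] E := D - (z : ℂ) • Q - (1 - Q) with hD'def
  have hD're : ∀ x : E, (inner ℂ (D' x) x : ℂ).re
      = (inner ℂ (D x) x : ℂ).re - z * (∑ k ∈ I, ‖P k x‖ ^ 2) - ‖x‖ ^ 2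
        + ∑ k ∈ I, ‖P k x‖ ^ 2 := by
    intro x
    have hx : D' x = D x - (z : ℂ) • (Q x) - (x - Q x) := by
      simp [hD'def, ContinuousLinearMap.sub_apply, ContinuousLinearMap.smul_apply]
    rw [hx]
    rw [inner_sub_left, inner_sub_left, inner_sub_left, inner_smul_left]
    have hxx : ((inner ℂ x x : ℂ)).re = ‖x‖ ^ 2 := by
      rw [← RCLike.re_to_complex, inner_self_eq_norm_sq]
    simp only [Complex.sub_re, Complex.conj_ofReal, Complex.re_ofReal_mul, hxx, hQre]
    ring
  have hDre : ∀ x : E, (inner ℂ (D x) x : ℂ).re ≤ -C₁ * ∑ k ∈ I, ‖P k x‖ ^ 2 := by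
    intro x
    rw [hD]
    simp only [ContinuousLinearMap.sum_apply, sum_inner, Complex.re_sum, Finset.mul_sum]
    exact Finset.sum_le_sum fun k hk => hDneg k hk x
  have hCz : 0 < C₁ + z := by linarith
  set c : ℝ := min (C₁ + z) 1 with hcdef
  have hc : 0 < c := lt_min hCz one_pos
  have hcoerD' : ∀ x : E, (inner ℂ (D' x) x : ℂ).re ≤ -c * ‖x‖ ^ 2 := by
    intro x
    have h1 := hD're x
    have h2 := hDre x
    have h3 := hpar x
    have h4 : (0:ℝ) ≤ ∑ k ∈ I, ‖P k x‖ ^ 2 := Finset.sum_nonneg fun k _ => sq_nonneg _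
    have hc1 : c ≤ C₁ + z := min_le_left _ _
    have hc2 : c ≤ 1 := min_le_right _ _
    nlinarith
  obtain ⟨S₀, hS₀l, hS₀r⟩ := stmt2_aux_inv D' c hc hcoerD'
  -- lower bound for D' on the range of Q
  have hQfix : ∀ y : E, Q y = y → C₁ / 2 * ‖y‖ ≤ ‖D' y‖ := by
    intro y hy
    have hs : ∑ k ∈ I, ‖P k y‖ ^ 2 = ‖y‖ ^ 2 := by
      rw [← hQre y, hy, ← RCLike.re_to_complex, inner_self_eq_norm_sq]
    have h1 : (inner ℂ (D' y) y : ℂ).re ≤ -(C₁ + z) * ‖y‖ ^ 2 := by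
      have := hD're y
      have := hDre y
      rw [hs] at *
      nlinarith
    rcases eq_or_ne y 0 with rfl | hy0
    · simp
    have hypos : 0 < ‖y‖ := norm_pos_iff.mpr hy0
    have h2 : (C₁ + z) * ‖y‖ ^ 2 ≤ ‖(inner ℂ (D' y) y : ℂ)‖ := by
      calc (C₁ + z) * ‖y‖ ^ 2 ≤ -(inner ℂ (D' y) y : ℂ).re := by linarith
        _ ≤ |(inner ℂ (D' y) y : ℂ).re| := neg_le_abs _
        _ ≤ ‖(inner ℂ (D' y) y : ℂ)‖ := Complex.abs_re_le_norm _
    have h3 : ‖(inner ℂ (D' y) y : ℂ)‖ ≤ ‖D' y‖ * ‖y‖ := norm_inner_le_norm _ _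
    nlinarith
  -- commutation relations
  have hPMPr : ∀ k m, (P k ∘L M ∘L P k) * P m = if k = m then P k ∘L M ∘L P k else 0 := by
    intro k m
    have h1 : (P k ∘L M ∘L P k) * P m = P k ∘L M ∘L (P k * P m) := rfl
    rw [h1, hPmul]
    by_cases h : k = m
    · subst h; simp
    · simp [h]
  have hPMPl : ∀ k m, P m * (P k ∘L M ∘L P k) = if m = k then P k ∘L M ∘L P k else 0 := by
    intro k m
    have h1 : P m * (P k ∘L M ∘L P k) = (P m * P k) ∘L M ∘L P k := rfl
    rw [h1, hPmul]
    by_cases h : m = k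
    · subst h; simp
    · simp [h, ContinuousLinearMap.zero_comp]
  have hDPr : ∀ m, D * P m = if m ∈ I then P m ∘L M ∘L P m else 0 := by
    intro m
    rw [hD, Finset.sum_mul]
    simp_rw [hPMPr]
    exact Finset.sum_ite_eq' I m _
  have hDPl : ∀ m, P m * D = if m ∈ I then P m ∘L M ∘L P m else 0 := by
    intro m
    rw [hD, Finset.mul_sum]
    simp_rw [hPMPl]
    exact Finset.sum_ite_eq I m _
  have hDP : ∀ m, D * P m = P m * D := by intro m; rw [hDPr, hDPl]
  have hQPc : ∀ m, Q * P m = P m * Q := by intro m; rw [hQP, hPQ]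
  have hD'P : ∀ m, D' * P m = P m * D' := by
    intro m
    simp only [hD'def, sub_mul, mul_sub, one_mul, mul_one, smul_mul_assoc, mul_smul_comm,
      hDP, hQPc]
  have hS₀P : ∀ m, S₀ * P m = P m * S₀ := by
    intro m
    calc S₀ * P m = S₀ * P m * (D' * S₀) := by rw [hS₀r, mul_one]
      _ = S₀ * (P m * D') * S₀ := by rw [← mul_assoc, mul_assoc S₀ (P m) D']
      _ = S₀ * (D' * P m) * S₀ := by rw [hD'P]
      _ = S₀ * D' * (P m * S₀) := by
          rw [← mul_assoc S₀ D' (P m), mul_assoc (S₀ * D') (P m) S₀]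
      _ = P m * S₀ := by rw [hS₀l, one_mul]
  -- Q-relations
  have hDQ : D * Q = D := by
    rw [hD, Finset.sum_mul]
    refine Finset.sum_congr rfl fun k hk => ?_
    have h1 : (P k ∘L M ∘L P k) * Q = P k ∘L M ∘L (P k * Q) := rfl
    rw [h1, hPQ, if_pos hk]
  have hQD : Q * D = D := by
    rw [hD, Finset.mul_sum]
    refine Finset.sum_congr rfl fun k hk => ?_
    have h1 : Q * (P k ∘L M ∘L P k) = (Q * P k) ∘L M ∘L P k := rfl
    rw [h1, hQP, if_pos hk]
  have hQD' : D' * Q = Q * D' := by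
    simp only [hD'def, sub_mul, mul_sub, one_mul, mul_one, smul_mul_assoc, mul_smul_comm,
      hDQ, hQD, hQ2]
  have hS₀Q : S₀ * Q = Q * S₀ := by
    calc S₀ * Q = S₀ * Q * (D' * S₀) := by rw [hS₀r, mul_one]
      _ = S₀ * (Q * D') * S₀ := by rw [← mul_assoc, mul_assoc S₀ Q D']
      _ = S₀ * (D' * Q) * S₀ := by rw [hQD']
      _ = S₀ * D' * (Q * S₀) := by
          rw [← mul_assoc S₀ D' Q, mul_assoc (S₀ * D') Q S₀]
      _ = Q * S₀ := by rw [hS₀l, one_mul]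
  -- operator norm of S₀ * Q
  have hS₀Qnorm : ‖S₀ * Q‖ ≤ 2 / C₁ := by
    refine ContinuousLinearMap.opNorm_le_bound _ (by positivity) fun x => ?_
    set y : E := S₀ (Q x) with hy
    have hyQ : Q y = y := by
      have h1 : Q ((S₀ * Q) x) = ((Q * S₀) * Q) x := rfl
      have h2 : ((Q * S₀) * Q) x = ((S₀ * Q) * Q) x := by rw [← hS₀Q]
      have h3 : (S₀ * Q) * Q = S₀ * Q := by rw [mul_assoc, hQ2]
      show Q ((S₀ * Q) x) = (S₀ * Q) x
      rw [h1, h2, h3]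
    have hD'y : D' y = Q x := by
      have h1 : D' ((S₀ * Q) x) = ((D' * S₀) * Q) x := by
        rw [mul_assoc]; rfl
      show D' ((S₀ * Q) x) = Q x
      rw [h1, hS₀r, one_mul]
    have h4 := hQfix y hyQ
    rw [hD'y] at h4
    have h5 : ‖Q x‖ ≤ ‖x‖ := hQnorm1 x
    have h6 : C₁ / 2 * ‖y‖ ≤ ‖x‖ := le_trans h4 h5
    show ‖y‖ ≤ 2 / C₁ * ‖x‖
    rw [div_mul_eq_mul_div, le_div_iff₀ hC₁]
    nlinarith [norm_nonneg y]
  -- relations for M11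
  have hQM11 : Q * M11 = M11 := by
    rw [hM11]
    show Q * (Q * (M * Q)) = Q * (M * Q)
    rw [← mul_assoc, hQ2]
  have hM11Q : M11 * Q = M11 := by
    rw [hM11]
    show Q * (M * Q) * Q = Q * (M * Q)
    rw [mul_assoc, mul_assoc, hQ2]
  have hQMD : Q * (M11 - D) = M11 - D := by rw [mul_sub, hQM11, hQD]
  have hMDQ : (M11 - D) * Q = M11 - D := by rw [sub_mul, hM11Q, hDQ]
  -- the Neumann series
  set B : E →L[ℂ] E := S₀ * (M11 - D) with hBdef
  have hBnorm : ‖B‖ ≤ q := by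
    have h1 : B = (S₀ * Q) * (M11 - D) := by
      rw [mul_assoc, hQMD]
    rw [h1]
    calc ‖S₀ * Q * (M11 - D)‖ ≤ ‖S₀ * Q‖ * ‖M11 - D‖ := norm_mul_le _ _
      _ ≤ 2 / C₁ * (q * C₁ / 2) := by
          apply mul_le_mul hS₀Qnorm hclose (norm_nonneg _) (by positivity)
      _ = q := by field_simp
  have hBlt : ‖-B‖ < 1 := by rw [norm_neg]; linarith
  let u : (E →L[ℂ] E)ˣ := Units.oneSub (-B) hBlt
  have huval : (u : E →L[ℂ] E) = 1 + B := by
    show 1 - (-B) = 1 + B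
    rw [sub_neg_eq_add]
  have hui : (↑u⁻¹ : E →L[ℂ] E) = ∑' n : ℕ, (-B) ^ n := rfl
  have huu : (↑u⁻¹ : E →L[ℂ] E) * ↑u = 1 := u.inv_mul
  have huu' : (↑u : E →L[ℂ] E) * ↑u⁻¹ = 1 := u.mul_inv
  set A' : E →L[ℂ] E := M11 - (z : ℂ) • Q - (1 - Q) with hA'def
  have hfact : A' = D' * ↑u := by
    rw [huval, mul_add, mul_one, hBdef, ← mul_assoc, hS₀r, one_mul, hA'def, hD'def]
    abel
  set Sinv : E →L[ℂ] E := (↑u⁻¹ : E →L[ℂ] E) * S₀ with hSinvdef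
  have hSinvA' : Sinv * A' = 1 := by
    rw [hfact, hSinvdef, mul_assoc, ← mul_assoc S₀ D' ↑u, hS₀l, one_mul, huu]
  have hA'Sinv : A' * Sinv = 1 := by
    rw [hfact, hSinvdef, mul_assoc, ← mul_assoc (↑u : E →L[ℂ] E) _ S₀, huu', one_mul, hS₀r]
  -- Sinv commutes with Q
  have hQB : Q * B = B * Q := by
    rw [hBdef, ← mul_assoc, ← hS₀Q, mul_assoc, hQMD, mul_assoc, hMDQ]
  have hQuval : Q * ↑u = (↑u : E →L[ℂ] E) * Q := by
    rw [huval, mul_add, add_mul, mul_one, one_mul, hQB]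
  have hQu : Q * ↑u⁻¹ = (↑u⁻¹ : E →L[ℂ] E) * Q := by
    calc Q * ↑u⁻¹ = (↑u⁻¹ * ↑u) * Q * ↑u⁻¹ := by rw [huu, one_mul]
      _ = ↑u⁻¹ * (↑u * Q) * ↑u⁻¹ := by rw [mul_assoc (↑u⁻¹ : E →L[ℂ] E) ↑u Q]
      _ = ↑u⁻¹ * (Q * ↑u) * ↑u⁻¹ := by rw [hQuval]
      _ = ↑u⁻¹ * Q * (↑u * ↑u⁻¹) := by
          rw [← mul_assoc (↑u⁻¹ : E →L[ℂ] E) Q ↑u, mul_assoc ((↑u⁻¹ : E →L[ℂ] E) * Q) ↑u ↑u⁻¹]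
      _ = ↑u⁻¹ * Q := by rw [huu', mul_one]
  have hQSinv : Q * Sinv = Sinv * Q := by
    rw [hSinvdef, ← mul_assoc, hQu, mul_assoc, ← hS₀Q, ← mul_assoc]
  have hQA' : Q * A' = A' * Q := by
    simp only [hA'def, mul_sub, sub_mul, hQM11, hM11Q, mul_smul_comm, smul_mul_assoc, hQ2,
      mul_one, one_mul]
  have hQ2' : ∀ X : E →L[ℂ] E, Q * (Q * X) = Q * X := fun X => by rw [← mul_assoc, hQ2]
  refine ⟨Q * Sinv * Q, ?_, ?_, ?_, ?_⟩
  · show Q * (Q * Sinv * Q * Q) = Q * Sinv * Q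
    simp only [mul_assoc]
    rw [hQ2', hQ2]
  · show (Q * Sinv * Q) * (M11 - (z : ℂ) • Q) = Q
    have hsplit : M11 - (z : ℂ) • Q = A' + (1 - Q) := by rw [hA'def]; abel
    rw [hsplit, mul_add]
    have h1 : Q * Sinv * Q * (1 - Q) = 0 := by
      rw [mul_assoc, mul_sub, mul_one, hQ2, sub_self, mul_zero]
    have h2 : Q * Sinv * Q * A' = Q := by
      rw [mul_assoc, mul_assoc, hQA', ← mul_assoc Sinv A' Q, hSinvA', one_mul, hQ2]
    rw [h1, h2, add_zero]
  · show (M11 - (z : ℂ) • Q) * (Q * Sinv * Q) = Q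
    have hsplit : M11 - (z : ℂ) • Q = A' + (1 - Q) := by rw [hA'def]; abel
    rw [hsplit, add_mul]
    have h1 : (1 - Q) * (Q * Sinv * Q) = 0 := by
      simp only [← mul_assoc]
      rw [sub_mul, one_mul, hQ2, sub_self, zero_mul, zero_mul]
    have h2 : A' * (Q * Sinv * Q) = Q := by
      simp only [← mul_assoc]
      rw [← hQA', mul_assoc Q A' Sinv, hA'Sinv, mul_one, hQ2]
    rw [h1, h2, add_zero]
  · intro j hj k hk
    -- banded structure of M in multiplicative form
    have hbandM : ∀ a b : ℕ, (p₀ : ℤ) < |(a : ℤ) - (b : ℤ)| → P a * M * P b = 0 := by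
      intro a b h
      have h0 := hband a b h
      rw [mul_assoc]
      exact h0
    have hM11' : M11 = Q * M * Q := by rw [hM11, mul_assoc]; rfl
    -- M11 - D is banded of width p₀
    have hBndMD : ∀ a b : ℕ, (p₀ : ℤ) < |(a : ℤ) - (b : ℤ)| → P a * (M11 - D) * P b = 0 := by
      intro a b h
      have hne : a ≠ b := by
        intro he
        subst he
        simp at h
        omega
      have h1 : P a * M11 * P b = 0 := by
        rw [hM11']
        have e : P a * (Q * M * Q) * P b = (P a * Q) * M * (Q * P b) := by
          simp only [mul_assoc]
        rw [e, hPQ, hQP]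
        by_cases ha : a ∈ I <;> by_cases hb : b ∈ I <;>
          simp [ha, hb, hbandM a b h]
      have h2 : P a * D * P b = 0 := by
        rw [mul_assoc, hDPr]
        by_cases hb : b ∈ I
        · rw [if_pos hb, hPMPl, if_neg hne]
        · rw [if_neg hb, mul_zero]
      rw [mul_sub, sub_mul, h1, h2, sub_zero]
    -- product of banded operators is banded
    have hBndmul : ∀ (a b : ℕ) (S T : E →L[ℂ] E),
        (∀ m n : ℕ, (a : ℤ) < |(m : ℤ) - (n : ℤ)| → P m * S * P n = 0) →
        (∀ m n : ℕ, (b : ℤ) < |(m : ℤ) - (n : ℤ)| → P m * T * P n = 0) →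
        ∀ m n : ℕ, ((a + b : ℕ) : ℤ) < |(m : ℤ) - (n : ℤ)| → P m * (S * T) * P n = 0 := by
      intro a b S T hS hT m n h
      ext x
      have hsum1 : HasSum (fun i => P i ((T * P n) x)) ((T * P n) x) := hPsum _
      have hsum2 : HasSum (fun i => (P m * S) (P i ((T * P n) x)))
          ((P m * S) ((T * P n) x)) := hsum1.mapL (P m * S)
      have hzero2 : ∀ i : ℕ, (P m * S) (P i ((T * P n) x)) = 0 := by
        intro i
        rcases le_or_gt |(m : ℤ) - (i : ℤ)| (a : ℤ) with hmi | hmi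
        · have htri : |(m : ℤ) - (n : ℤ)| ≤ |(m : ℤ) - (i : ℤ)| + |(i : ℤ) - (n : ℤ)| :=
            abs_sub_le _ _ _
          have hin : (b : ℤ) < |(i : ℤ) - (n : ℤ)| := by
            push_cast at h
            linarith
          have h0 : P i * T * P n = 0 := hT i n hin
          have e : P i ((T * P n) x) = (P i * T * P n) x := by
            rw [mul_assoc]
            rfl
          rw [e, h0]
          simp
        · have h0 : P m * S * P i = 0 := hS m i hmi
          have e : (P m * S) (P i ((T * P n) x)) = ((P m * S * P i) * (T * P n)) x := by
            simp only [mul_assoc]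
            rfl
          rw [e, h0]
          simp
      have hval : (P m * S) ((T * P n) x) = 0 := by
        have h5 : HasSum (fun _ : ℕ => (0 : E)) ((P m * S) ((T * P n) x)) := by
          simpa only [hzero2] using hsum2
        simpa using h5.unique hasSum_zero
      have e2 : P m * (S * T) * P n = (P m * S) * (T * P n) := by
        simp only [mul_assoc]
      rw [ContinuousLinearMap.zero_apply, e2, ContinuousLinearMap.mul_apply]
      exact hval
    -- B is banded
    have hBndB : ∀ m n : ℕ, (p₀ : ℤ) < |(m : ℤ) - (n : ℤ)| → P m * B * P n = 0 := by
      intro m n h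
      have e : P m * B * P n = S₀ * (P m * (M11 - D) * P n) := by
        rw [hBdef, ← mul_assoc (P m) S₀ (M11 - D), ← hS₀P m]
        simp only [mul_assoc]
      rw [e, hBndMD m n h, mul_zero]
    -- powers of -B are banded
    have hBndpow : ∀ s : ℕ, ∀ m n : ℕ, ((s * p₀ : ℕ) : ℤ) < |(m : ℤ) - (n : ℤ)| →
        P m * (-B) ^ s * P n = 0 := by
      intro s
      induction s with
      | zero =>
        intro m n h
        have hne : m ≠ n := by
          intro he
          subst he
          simp at h
        rw [pow_zero, mul_one, hPmul, if_neg hne]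
      | succ s ih =>
        intro m n h
        have hBneg : ∀ m n : ℕ, (p₀ : ℤ) < |(m : ℤ) - (n : ℤ)| → P m * (-B) * P n = 0 := by
          intro m n hmn
          rw [mul_neg, neg_mul, hBndB m n hmn, neg_zero]
        have hh : ((s * p₀ + p₀ : ℕ) : ℤ) < |(m : ℤ) - (n : ℤ)| := by
          have e : (s + 1) * p₀ = s * p₀ + p₀ := by ring
          rwa [e] at h
        have := hBndmul (s * p₀) p₀ ((-B) ^ s) (-B) ih hBneg m n hh
        rwa [← pow_succ] at this
    -- norm bounds
    have hpow_norm : ∀ s : ℕ, ‖(-B) ^ s‖ ≤ q ^ s := by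
      intro s
      induction s with
      | zero =>
        simp only [pow_zero]
        simpa [ContinuousLinearMap.one_def] using ContinuousLinearMap.norm_id_le
      | succ s ih =>
        rw [pow_succ, pow_succ]
        calc ‖(-B) ^ s * (-B)‖ ≤ ‖(-B) ^ s‖ * ‖-B‖ := norm_mul_le _ _
          _ ≤ q ^ s * q := by
              apply mul_le_mul ih (by rw [norm_neg]; exact hBnorm) (norm_nonneg _)
                (pow_nonneg hq0.le s)
    have hPjnorm : ‖P j‖ ≤ 1 :=
      ContinuousLinearMap.opNorm_le_bound _ zero_le_one fun x => by simpa using hPnorm1 j x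
    have hPknorm : ‖P k‖ ≤ 1 :=
      ContinuousLinearMap.opNorm_le_bound _ zero_le_one fun x => by simpa using hPnorm1 k x
    have hSPk : ‖S₀ * P k‖ ≤ 2 / C₁ := by
      have e : S₀ * P k = (S₀ * Q) * P k := by rw [mul_assoc, hQP, if_pos hk]
      rw [e]
      calc ‖S₀ * Q * P k‖ ≤ ‖S₀ * Q‖ * ‖P k‖ := norm_mul_le _ _
        _ ≤ 2 / C₁ * 1 := mul_le_mul hS₀Qnorm hPknorm (norm_nonneg _) (by positivity)
        _ = 2 / C₁ := mul_one _
    set g : ℕ → E →L[ℂ] E := fun s => P j * (-B) ^ s * (S₀ * P k) with hgdef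
    have hgnorm : ∀ s, ‖g s‖ ≤ 2 / C₁ * q ^ s := by
      intro s
      calc ‖g s‖ ≤ ‖P j * (-B) ^ s‖ * ‖S₀ * P k‖ := norm_mul_le _ _
        _ ≤ ‖P j‖ * ‖(-B) ^ s‖ * ‖S₀ * P k‖ :=
            mul_le_mul_of_nonneg_right (norm_mul_le _ _) (norm_nonneg _)
        _ ≤ 1 * q ^ s * (2 / C₁) := by
            apply mul_le_mul ?_ hSPk (norm_nonneg _) ?_
            · exact mul_le_mul hPjnorm (hpow_norm s) (norm_nonneg _) zero_le_one
            · positivity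
        _ = 2 / C₁ * q ^ s := by ring
    have hgeom : Summable (fun s : ℕ => 2 / C₁ * q ^ s) :=
      (summable_geometric_of_lt_one hq0.le hq1).mul_left _
    have hgsum : Summable g := Summable.of_norm_bounded hgeom hgnorm
    have hsumpow : Summable (fun s : ℕ => (-B) ^ s) :=
      Summable.of_norm_bounded (summable_geometric_of_lt_one hq0.le hq1) hpow_norm
    have hjQ : P j * Q = P j := by rw [hPQ, if_pos hj]
    have hkQ : Q * P k = P k := by rw [hQP, if_pos hk]
    -- identify the block of R with the series
    have hRP : P j ∘L (Q * Sinv * Q) ∘L P k = ∑' s, g s := by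
      have e0 : P j ∘L (Q * Sinv * Q) ∘L P k = P j * (Q * Sinv * Q) * P k := by
        rw [mul_assoc]
        rfl
      have e1 : P j * (Q * Sinv * Q) * P k = P j * Sinv * P k := by
        simp only [← mul_assoc]
        rw [hjQ, mul_assoc (P j * Sinv) Q (P k), hkQ]
      have e2 : P j * Sinv * P k = P j * ((↑u⁻¹ : E →L[ℂ] E) * (S₀ * P k)) := by
        rw [hSinvdef]
        simp only [mul_assoc]
      have ht1 : (↑u⁻¹ : E →L[ℂ] E) * (S₀ * P k) = ∑' s, (-B) ^ s * (S₀ * P k) := by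
        rw [hui]
        exact (hsumpow.tsum_mul_right (S₀ * P k)).symm
      rw [e0, e1, e2, ht1]
      rw [← (hsumpow.mul_right (S₀ * P k)).tsum_mul_left (P j)]
      exact tsum_congr fun s => by rw [← mul_assoc]
    set d : ℕ := ((j : ℤ) - (k : ℤ)).natAbs with hddef
    have hd : (d : ℤ) = |(j : ℤ) - (k : ℤ)| := (Int.abs_eq_natAbs _).symm
    set n₀ : ℕ := ⌈(d : ℝ) / (p₀ : ℝ)⌉₊ with hn₀def
    have hvanish : ∀ s < n₀, g s = 0 := by
      intro s hs
      have h1 : (s : ℝ) < (d : ℝ) / (p₀ : ℝ) := Nat.lt_ceil.mp hs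
      have hp₀R : (0 : ℝ) < (p₀ : ℝ) := by exact_mod_cast hp₀
      have h2 : (s : ℝ) * (p₀ : ℝ) < (d : ℝ) := by
        rw [← lt_div_iff₀ hp₀R]
        exact h1
      have h3 : ((s * p₀ : ℕ) : ℤ) < |(j : ℤ) - (k : ℤ)| := by
        rw [← hd]
        exact_mod_cast h2
      have h4 : P j * (-B) ^ s * P k = 0 := hBndpow s j k h3
      have e : g s = (P j * (-B) ^ s * P k) * S₀ := by
        rw [hgdef]
        show P j * (-B) ^ s * (S₀ * P k) = _
        rw [hS₀P k]
        simp only [← mul_assoc]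
      rw [e, h4, zero_mul]
    have hgoalexp : ((|(j : ℤ) - (k : ℤ)| : ℤ) : ℝ) = (d : ℝ) := by
      rw [← hd]
      push_cast
      ring
    have hsplit2 : ∑' s, g s = ∑ s ∈ Finset.range n₀, g s + ∑' s, g (s + n₀) :=
      (Summable.sum_add_tsum_nat_add n₀ hgsum).symm
    have hzero3 : ∑ s ∈ Finset.range n₀, g s = 0 :=
      Finset.sum_eq_zero fun s hs => hvanish s (Finset.mem_range.mp hs)
    have htail : ‖∑' s, g (s + n₀)‖ ≤ 2 / C₁ * q ^ n₀ * (1 - q)⁻¹ := by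
      have hg2 : HasSum (fun s : ℕ => 2 / C₁ * q ^ n₀ * q ^ s) (2 / C₁ * q ^ n₀ * (1 - q)⁻¹) :=
        (hasSum_geometric_of_lt_one hq0.le hq1).mul_left _
      refine tsum_of_norm_bounded hg2 fun s => ?_
      calc ‖g (s + n₀)‖ ≤ 2 / C₁ * q ^ (s + n₀) := hgnorm _
        _ = 2 / C₁ * q ^ n₀ * q ^ s := by rw [pow_add]; ring
    have hmain : ‖∑' s, g s‖ ≤ 2 / C₁ * q ^ n₀ * (1 - q)⁻¹ := by
      rw [hsplit2, hzero3, zero_add]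
      exact htail
    have hq1' : (0 : ℝ) < 1 - q := by linarith
    have hfin : 2 / C₁ * q ^ n₀ * (1 - q)⁻¹
        ≤ 2 / (C₁ * (1 - q)) * q ^ ((d : ℝ) / (p₀ : ℝ)) := by
      have h1 : (q : ℝ) ^ ((n₀ : ℝ)) ≤ q ^ ((d : ℝ) / (p₀ : ℝ)) :=
        Real.rpow_le_rpow_of_exponent_ge hq0 hq1.le (Nat.le_ceil _)
      have h2 : (q : ℝ) ^ ((n₀ : ℝ)) = q ^ n₀ := Real.rpow_natCast q n₀
      rw [h2] at h1
      have hpos : (0 : ℝ) < 2 / (C₁ * (1 - q)) := by positivity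
      have e : 2 / C₁ * q ^ n₀ * (1 - q)⁻¹ = 2 / (C₁ * (1 - q)) * q ^ n₀ := by
        field_simp
      rw [e]
      exact mul_le_mul_of_nonneg_left h1 hpos.le
    calc ‖P j ∘L (Q * Sinv * Q) ∘L P k‖ = ‖∑' s, g s‖ := by rw [hRP]
      _ ≤ 2 / C₁ * q ^ n₀ * (1 - q)⁻¹ := hmain
      _ ≤ 2 / (C₁ * (1 - q)) * q ^ ((d : ℝ) / (p₀ : ℝ)) := hfin
      _ = 2 / (C₁ * (1 - q)) * q ^ (((|(j : ℤ) - (k : ℤ)| : ℤ) : ℝ) / (p₀ : ℝ)) := by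
          rw [hgoalexp]
end

section
/- Let B be a bounded operator on ℓ²-type block space with blocks B_{jk} (P_j B P_k) satisfying B_{jk} = 0 for |j − k| > p₀, and ‖B‖ ≤ q < 1. Then for all indices j, k, ‖((1 − B)^{-1})_{jk}‖ ≤ (1 − q)^{-1} q^{⌈|j−k|/p₀⌉}, in particular the inverse of 1 − B has exponentially decaying off-diagonal blocks. -/
open ContinuousLinearMap

/-- if `B` is a banded block operator (`B_{jk} = 0` for `|j − k| > p₀`) with
`‖B‖ ≤ q < 1`, then the blocks of `(1 − B)⁻¹` decay exponentially off the diagonal: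
`‖((1 − B)⁻¹)_{jk}‖ ≤ (1 − q)⁻¹ q^{⌈|j−k|/p₀⌉}`. -/
theorem stmt_3
    {E : Type*} [NormedAddCommGroup E] [InnerProductSpace ℂ E] [CompleteSpace E]
    (B : E →L[ℂ] E)
    (P : ℕ → E →L[ℂ] E)
    (hPsa : ∀ k, IsSelfAdjoint (P k)) (hPidem : ∀ k, P k ∘L P k = P k)
    (hPorth : ∀ j k, j ≠ k → P j ∘L P k = 0)
    (hPsum : ∀ x : E, HasSum (fun k => P k x) x)
    (p₀ : ℕ) (hp₀ : 0 < p₀)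
    (hband : ∀ j k : ℕ, (p₀ : ℤ) < |(j : ℤ) - (k : ℤ)| → P j ∘L B ∘L P k = 0)
    (q : ℝ) (hq : ‖B‖ ≤ q) (hq1 : q < 1)
    (R : E →L[ℂ] E)
    (hR1 : R ∘L (1 - B) = 1) (hR2 : (1 - B) ∘L R = 1) :
    ∀ j k : ℕ,
      ‖P j ∘L R ∘L P k‖
        ≤ (1 - q)⁻¹ * q ^ (⌈((|(j : ℤ) - (k : ℤ)| : ℤ) : ℝ) / (p₀ : ℝ)⌉₊) := by
  have hq0 : 0 ≤ q := le_trans (norm_nonneg B) hq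
  have h1q : 0 < 1 - q := by linarith
  -- banded powers
  have key : ∀ s j k : ℕ, ((s * p₀ : ℕ) : ℤ) < |(j : ℤ) - (k : ℤ)| →
      P j ∘L (B ^ s) ∘L P k = 0 := by
    intro s
    induction s with
    | zero =>
      intro j k h
      have hjk : j ≠ k := by
        intro e; subst e; simp at h
      have := hPorth j k hjk
      rw [pow_zero]
      simpa [ContinuousLinearMap.one_def] using this
    | succ s ih =>
      intro j k h
      ext x
      set y := (B ^ s) (P k x) with hy
      have hsum := (hPsum y).mapL (P j ∘L B)
      have hzero : ∀ l : ℕ, (P j ∘L B) (P l y) = 0 := by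
        intro l
        by_cases hl : (p₀ : ℤ) < |(j : ℤ) - (l : ℤ)|
        · have hb := hband j l hl
          have : (P j ∘L B) (P l y) = (P j ∘L B ∘L P l) y := rfl
          rw [this, hb]; rfl
        · push_neg at hl
          have harith : ((s * p₀ : ℕ) : ℤ) < |(l : ℤ) - (k : ℤ)| := by
            have tri := abs_sub_le (j : ℤ) (l : ℤ) (k : ℤ)
            push_cast at h ⊢
            linarith
          have hlk := ih l k harith
          have : (P j ∘L B) (P l y) = (P j ∘L B) ((P l ∘L (B ^ s) ∘L P k) x) := rfl
          rw [this, hlk]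
          simp
      have : (P j ∘L B) y = 0 := by
        have h0 : HasSum (fun l => (P j ∘L B) (P l y)) ((P j ∘L B) y) := hsum
        simp only [hzero] at h0
        exact h0.unique hasSum_zero
      have hgoal : (P j ∘L (B ^ (s + 1)) ∘L P k) x = (P j ∘L B) y := by
        rw [pow_succ']
        rfl
      simp only [ContinuousLinearMap.zero_apply, hgoal, this]
  -- identity R = 1 + B * R
  have hIdent : R = 1 + B * R := by
    have h2 : (1 - B) * R = 1 := hR2
    rw [sub_mul, one_mul, sub_eq_iff_eq_add] at h2
    exact h2
  -- telescoping
  have tele : ∀ m : ℕ, R = (∑ s ∈ Finset.range m, B ^ s) + B ^ m * R := by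
    intro m
    induction m with
    | zero => simp
    | succ m ih =>
      calc R = (∑ s ∈ Finset.range m, B ^ s) + B ^ m * R := ih
        _ = (∑ s ∈ Finset.range m, B ^ s) + B ^ m * (1 + B * R) := by rw [← hIdent]
        _ = (∑ s ∈ Finset.range (m + 1), B ^ s) + B ^ (m + 1) * R := by
            rw [Finset.sum_range_succ, mul_add, mul_one, pow_succ, mul_assoc, add_assoc]
  -- norm bounds
  have hRn : ‖R‖ ≤ (1 - q)⁻¹ := by
    have h1 : ‖R‖ ≤ 1 + q * ‖R‖ := by
      calc ‖R‖ = ‖1 + B * R‖ := by rw [← hIdent]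
        _ ≤ ‖(1 : E →L[ℂ] E)‖ + ‖B * R‖ := norm_add_le _ _
        _ ≤ 1 + ‖B‖ * ‖R‖ := by
            gcongr
            · rw [ContinuousLinearMap.one_def]; exact ContinuousLinearMap.norm_id_le
            · exact norm_mul_le _ _
        _ ≤ 1 + q * ‖R‖ := by
            nlinarith [norm_nonneg R]
    rw [← one_div, le_div_iff₀ h1q]
    nlinarith
  have hBm : ∀ m : ℕ, ‖(B : E →L[ℂ] E) ^ m‖ ≤ q ^ m := by
    intro m
    rcases Nat.eq_zero_or_pos m with hm | hm
    · subst hm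
      simp only [pow_zero]
      rw [ContinuousLinearMap.one_def]
      exact ContinuousLinearMap.norm_id_le
    · calc ‖B ^ m‖ ≤ ‖B‖ ^ m := norm_pow_le' B hm
        _ ≤ q ^ m := pow_le_pow_left₀ (norm_nonneg B) hq m
  have hPn : ∀ j, ‖P j‖ ≤ 1 := by
    intro j
    have h2 : ‖star (P j) * P j‖ = ‖P j‖ * ‖P j‖ := CStarRing.norm_star_mul_self
    rw [(hPsa j).star_eq] at h2
    have h1 : P j * P j = P j := hPidem j
    rw [h1] at h2
    nlinarith [norm_nonneg (P j)]
  -- main computation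
  intro j k
  set m := ⌈((|(j : ℤ) - (k : ℤ)| : ℤ) : ℝ) / (p₀ : ℝ)⌉₊ with hm
  have hzero : ∀ s < m, P j ∘L (B ^ s) ∘L P k = 0 := by
    intro s hs
    apply key
    have h1 : (s : ℝ) < ((|(j : ℤ) - (k : ℤ)| : ℤ) : ℝ) / (p₀ : ℝ) := Nat.lt_ceil.mp hs
    have hp : (0 : ℝ) < (p₀ : ℝ) := by exact_mod_cast hp₀
    have h2 : (s : ℝ) * (p₀ : ℝ) < ((|(j : ℤ) - (k : ℤ)| : ℤ) : ℝ) := (lt_div_iff₀ hp).mp h1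
    exact_mod_cast h2
  have expand : P j ∘L R ∘L P k = P j * (B ^ m * (R * P k)) := by
    have hz : P j * ((∑ s ∈ Finset.range m, B ^ s) * P k) = 0 := by
      rw [Finset.sum_mul, Finset.mul_sum]
      apply Finset.sum_eq_zero
      intro s hs
      exact hzero s (Finset.mem_range.mp hs)
    calc P j ∘L R ∘L P k = P j * (R * P k) := rfl
      _ = P j * (((∑ s ∈ Finset.range m, B ^ s) + B ^ m * R) * P k) := by rw [← tele m]
      _ = P j * ((∑ s ∈ Finset.range m, B ^ s) * P k) + P j * (B ^ m * (R * P k)) := by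
          rw [add_mul, mul_add, mul_assoc]
      _ = P j * (B ^ m * (R * P k)) := by rw [hz, zero_add]
  rw [expand]
  calc ‖P j * (B ^ m * (R * P k))‖ ≤ ‖P j‖ * ‖B ^ m * (R * P k)‖ := norm_mul_le _ _
    _ ≤ ‖P j‖ * (‖B ^ m‖ * ‖R * P k‖) := by
        gcongr; exact norm_mul_le _ _
    _ ≤ ‖P j‖ * (‖B ^ m‖ * (‖R‖ * ‖P k‖)) := by
        gcongr
        exact norm_mul_le _ _
    _ ≤ 1 * (q ^ m * ((1 - q)⁻¹ * 1)) := by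
        apply mul_le_mul (hPn j) ?_ (by positivity) (by norm_num)
        apply mul_le_mul (hBm m) ?_ (by positivity) (by positivity)
        exact mul_le_mul hRn (hPn k) (norm_nonneg _) (by positivity)
    _ = (1 - q)⁻¹ * q ^ m := by ring
end

section
/- Let M be a bounded self-adjoint operator on H = H₀ ⊕ H₁ ⊕ H₂ with blocks M^(αβ), 0 ≤ α,β ≤ 2, such that M^(02) = 0 and M^(20) = 0. Suppose z ∈ ℂ is such that M^(11) − z, M^(22) − z, and the Schur complement X(z) = M^(11) − z − M^(12)(M^(22) − z)^{-1}M^(21) restricted to the appropriate spaces are all invertible, and moreover X̃(z) := M^(00) − z − M^(01) ((M'_2 − z)^{-1})^{(11)} M^(10) is invertible, where M'_2 is the operator built from blocks M^(αβ), α,β ∈ {1,2}. Then M − z is invertible and ((M − z)^{-1})^{(00)} = X̃(z)^{-1}. -/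
open ContinuousLinearMap

private theorem schur_ring {R : Type*} [Ring R] (p q a b c d r s : R)
    (hpq1 : p + q = 1) (hp : p * p = p) (hq : q * q = q)
    (hpq : p * q = 0) (hqp : q * p = 0)
    (ha : p * a * p = a) (hb : p * b * q = b) (hc : q * c * p = c) (hd : q * d * q = d)
    (hr : q * r * q = r) (hrd : r * d = q) (hdr : d * r = q)
    (hs : p * s * p = s) (hsS : s * (a - b * r * c) = p) (hSs : (a - b * r * c) * s = p) :
    (a + b + c + d) * (s - s * b * r - r * c * s + r + r * c * s * b * r) = 1 ∧
    (s - s * b * r - r * c * s + r + r * c * s * b * r) * (a + b + c + d) = 1 ∧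
    p * (s - s * b * r - r * c * s + r + r * c * s * b * r) * p = s := by
  -- zero products
  have har : a * r = 0 := by
    rw [← ha, ← hr, show p * a * p * (q * r * q) = p * a * ((p * q) * (r * q)) from by
      noncomm_ring, hpq, zero_mul, mul_zero]
  have hbs : b * s = 0 := by
    rw [← hb, ← hs, show p * b * q * (p * s * p) = p * b * ((q * p) * (s * p)) from by
      noncomm_ring, hqp, zero_mul, mul_zero]
  have hcr : c * r = 0 := by
    rw [← hc, ← hr, show q * c * p * (q * r * q) = q * c * ((p * q) * (r * q)) from by
      noncomm_ring, hpq, zero_mul, mul_zero]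
  have hds : d * s = 0 := by
    rw [← hd, ← hs, show q * d * q * (p * s * p) = q * d * ((q * p) * (s * p)) from by
      noncomm_ring, hqp, zero_mul, mul_zero]
  have hra : r * a = 0 := by
    rw [← hr, ← ha, show q * r * q * (p * a * p) = q * r * ((q * p) * (a * p)) from by
      noncomm_ring, hqp, zero_mul, mul_zero]
  have hrb : r * b = 0 := by
    rw [← hr, ← hb, show q * r * q * (p * b * q) = q * r * ((q * p) * (b * q)) from by
      noncomm_ring, hqp, zero_mul, mul_zero]
  have hsc : s * c = 0 := by
    rw [← hs, ← hc, show p * s * p * (q * c * p) = p * s * ((p * q) * (c * p)) from by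
      noncomm_ring, hpq, zero_mul, mul_zero]
  have hsd : s * d = 0 := by
    rw [← hs, ← hd, show p * s * p * (q * d * q) = p * s * ((p * q) * (d * q)) from by
      noncomm_ring, hpq, zero_mul, mul_zero]
  have hpr : p * r = 0 := by
    rw [← hr, show p * (q * r * q) = (p * q) * (r * q) from by noncomm_ring, hpq, zero_mul]
  have hrp : r * p = 0 := by
    rw [← hr, show q * r * q * p = q * r * (q * p) from by noncomm_ring, hqp, mul_zero]
  -- absorption
  have hpb : p * b = b := by
    rw [← hb, show p * (p * b * q) = (p * p) * b * q from by noncomm_ring, hp]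
  have hbq : b * q = b := by
    rw [← hb, show (p * b * q) * q = p * b * (q * q) from by noncomm_ring, hq]
  have hqc : q * c = c := by
    rw [← hc, show q * (q * c * p) = (q * q) * c * p from by noncomm_ring, hq]
  have hcp : c * p = c := by
    rw [← hc, show (q * c * p) * p = q * c * (p * p) from by noncomm_ring, hp]
  refine ⟨?_, ?_, ?_⟩
  · have e1 : a * (s - s * b * r - r * c * s + r + r * c * s * b * r)
        = a * s - a * s * b * r := by
      rw [show a * (s - s * b * r - r * c * s + r + r * c * s * b * r)
          = a * s - a * s * b * r - (a * r) * (c * s) + a * r + (a * r) * (c * s * b * r) from by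
        noncomm_ring, har]
      noncomm_ring
    have e2 : b * (s - s * b * r - r * c * s + r + r * c * s * b * r)
        = b * r - b * r * c * s + b * r * c * s * b * r := by
      rw [show b * (s - s * b * r - r * c * s + r + r * c * s * b * r)
          = b * s - (b * s) * (b * r) - b * r * c * s + b * r + (b * r) * (c * s * b * r) from by
        noncomm_ring, hbs]
      noncomm_ring
    have e3 : c * (s - s * b * r - r * c * s + r + r * c * s * b * r)
        = c * s - c * s * b * r := by
      rw [show c * (s - s * b * r - r * c * s + r + r * c * s * b * r)
          = c * s - c * s * b * r - (c * r) * (c * s) + c * r + (c * r) * (c * s * b * r) from by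
        noncomm_ring, hcr]
      noncomm_ring
    have e4 : d * (s - s * b * r - r * c * s + r + r * c * s * b * r)
        = q - c * s + c * s * b * r := by
      rw [show d * (s - s * b * r - r * c * s + r + r * c * s * b * r)
          = d * s - (d * s) * (b * r) - (d * r) * (c * s) + d * r + (d * r) * (c * s * b * r) from by
        noncomm_ring, hds, hdr, show q * (c * s) = (q * c) * s from by noncomm_ring,
        show q * (c * s * b * r) = (q * c) * (s * b * r) from by noncomm_ring, hqc]
      noncomm_ring
    rw [add_mul, add_mul, add_mul, e1, e2, e3, e4,
      show (a * s - a * s * b * r) + (b * r - b * r * c * s + b * r * c * s * b * r)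
          + (c * s - c * s * b * r) + (q - c * s + c * s * b * r)
        = (a * s - b * r * c * s) - (a * s - b * r * c * s) * b * r + b * r + q from by
        noncomm_ring,
      show a * s - b * r * c * s = (a - b * r * c) * s from by noncomm_ring, hSs,
      show p * b * r = (p * b) * r from by noncomm_ring, hpb, ← hpq1]
    abel
  · have e1 : (s - s * b * r - r * c * s + r + r * c * s * b * r) * a
        = s * a - r * c * s * a := by
      rw [show (s - s * b * r - r * c * s + r + r * c * s * b * r) * a
          = s * a - (s * b) * (r * a) - r * c * s * a + r * a + (r * c * s * b) * (r * a) from by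
        noncomm_ring, hra]
      noncomm_ring
    have e2 : (s - s * b * r - r * c * s + r + r * c * s * b * r) * b
        = s * b - r * c * s * b := by
      rw [show (s - s * b * r - r * c * s + r + r * c * s * b * r) * b
          = s * b - (s * b) * (r * b) - r * c * s * b + r * b + (r * c * s * b) * (r * b) from by
        noncomm_ring, hrb]
      noncomm_ring
    have e3 : (s - s * b * r - r * c * s + r + r * c * s * b * r) * c
        = r * c - s * b * r * c + r * c * s * b * r * c := by
      rw [show (s - s * b * r - r * c * s + r + r * c * s * b * r) * c
          = s * c - s * b * r * c - (r * c) * (s * c) + r * c + r * c * s * b * r * c from by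
        noncomm_ring, hsc]
      noncomm_ring
    have e4 : (s - s * b * r - r * c * s + r + r * c * s * b * r) * d
        = q - s * b + r * c * s * b := by
      rw [show (s - s * b * r - r * c * s + r + r * c * s * b * r) * d
          = s * d - (s * b) * (r * d) - (r * c) * (s * d) + r * d + (r * c * s * b) * (r * d) from by
        noncomm_ring, hsd, hrd, show (s * b) * q = s * (b * q) from by noncomm_ring,
        show (r * c * s * b) * q = (r * c * s) * (b * q) from by noncomm_ring, hbq]
      noncomm_ring
    rw [mul_add, mul_add, mul_add, e1, e2, e3, e4,
      show (s * a - r * c * s * a) + (s * b - r * c * s * b)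
          + (r * c - s * b * r * c + r * c * s * b * r * c) + (q - s * b + r * c * s * b)
        = (s * a - s * b * r * c) - (r * c) * (s * a - s * b * r * c) + r * c + q from by
        noncomm_ring,
      show s * a - s * b * r * c = s * (a - b * r * c) from by noncomm_ring, hsS,
      show (r * c) * p = r * (c * p) from by noncomm_ring, hcp, ← hpq1]
    abel
  · rw [show p * (s - s * b * r - r * c * s + r + r * c * s * b * r) * p
        = p * s * p - (p * (s * b)) * (r * p) - (p * r) * (c * (s * p)) + (p * r) * p
          + (p * r) * ((c * s * b * r) * p) from by noncomm_ring, hpr, hrp, hs]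
    simp


/-- nested Schur complement identity, (3.7)–(3.10) of Proposition 3.1:
for a bounded self-adjoint operator `M` on `H₀ ⊕ H₁ ⊕ H₂` with `M^(02) = M^(20) = 0`, if
`M^(11) − z`, `M^(22) − z`, the Schur complement
`X(z) = M^(11) − z − M^(12)(M^(22) − z)⁻¹M^(21)`, and
`X̃(z) = M^(00) − z − M^(01)((M'₂ − z)⁻¹)^(11)M^(10)` are all invertible (on the corresponding
subspaces, where `M'₂` is built from the blocks `M^(αβ)`, `α, β ∈ {1, 2}`), then `M − z` is
invertible and `((M − z)⁻¹)^(00) = X̃(z)⁻¹`. -/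
theorem stmt_11
    {E : Type*} [NormedAddCommGroup E] [InnerProductSpace ℂ E] [CompleteSpace E]
    (M P₀ P₁ P₂ : E →L[ℂ] E)
    (hM : IsSelfAdjoint M)
    (hP₀sa : IsSelfAdjoint P₀) (hP₁sa : IsSelfAdjoint P₁) (hP₂sa : IsSelfAdjoint P₂)
    (hP₀idem : P₀ ∘L P₀ = P₀) (hP₁idem : P₁ ∘L P₁ = P₁) (hP₂idem : P₂ ∘L P₂ = P₂)
    (h01 : P₀ ∘L P₁ = 0) (h02 : P₀ ∘L P₂ = 0) (h12 : P₁ ∘L P₂ = 0)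
    (hsum : P₀ + P₁ + P₂ = 1)
    (hM02 : P₀ ∘L M ∘L P₂ = 0) (hM20 : P₂ ∘L M ∘L P₀ = 0)
    (z : ℂ)
    -- `M^(11) − z` is invertible on `H₁`:
    (R11 : E →L[ℂ] E) (hR11a : P₁ ∘L R11 ∘L P₁ = R11)
    (hR11b : R11 ∘L (P₁ ∘L M ∘L P₁ - z • P₁) = P₁)
    (hR11c : (P₁ ∘L M ∘L P₁ - z • P₁) ∘L R11 = P₁)
    -- `M^(22) − z` is invertible on `H₂`:
    (R22 : E →L[ℂ] E) (hR22a : P₂ ∘L R22 ∘L P₂ = R22)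
    (hR22b : R22 ∘L (P₂ ∘L M ∘L P₂ - z • P₂) = P₂)
    (hR22c : (P₂ ∘L M ∘L P₂ - z • P₂) ∘L R22 = P₂)
    -- the Schur complement `X(z)` is invertible on `H₁`:
    (RX : E →L[ℂ] E) (hRXa : P₁ ∘L RX ∘L P₁ = RX)
    (hRXb : RX ∘L (P₁ ∘L M ∘L P₁ - z • P₁ - (P₁ ∘L M ∘L P₂) ∘L R22 ∘L (P₂ ∘L M ∘L P₁)) = P₁)
    (hRXc : (P₁ ∘L M ∘L P₁ - z • P₁ - (P₁ ∘L M ∘L P₂) ∘L R22 ∘L (P₂ ∘L M ∘L P₁)) ∘L RX = P₁)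
    -- `M'₂ − z` is invertible on `H₁ ⊕ H₂`:
    (R2 : E →L[ℂ] E) (hR2a : (P₁ + P₂) ∘L R2 ∘L (P₁ + P₂) = R2)
    (hR2b : R2 ∘L ((P₁ + P₂) ∘L M ∘L (P₁ + P₂) - z • (P₁ + P₂)) = P₁ + P₂)
    (hR2c : ((P₁ + P₂) ∘L M ∘L (P₁ + P₂) - z • (P₁ + P₂)) ∘L R2 = P₁ + P₂)
    -- `X̃(z)` is invertible on `H₀`:
    (Rt : E →L[ℂ] E) (hRta : P₀ ∘L Rt ∘L P₀ = Rt)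
    (hRtb : Rt ∘L (P₀ ∘L M ∘L P₀ - z • P₀
        - (P₀ ∘L M ∘L P₁) ∘L (P₁ ∘L R2 ∘L P₁) ∘L (P₁ ∘L M ∘L P₀)) = P₀)
    (hRtc : (P₀ ∘L M ∘L P₀ - z • P₀
        - (P₀ ∘L M ∘L P₁) ∘L (P₁ ∘L R2 ∘L P₁) ∘L (P₁ ∘L M ∘L P₀)) ∘L Rt = P₀) :
    IsUnit (M - z • (1 : E →L[ℂ] E)) ∧
    P₀ ∘L Ring.inverse (M - z • (1 : E →L[ℂ] E)) ∘L P₀ = Rt := by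
  have h01' : P₀ * P₁ = 0 := h01
  have h02' : P₀ * P₂ = 0 := h02
  have h12' : P₁ * P₂ = 0 := h12
  have hstar : ∀ A B : E →L[ℂ] E, IsSelfAdjoint A → IsSelfAdjoint B → A * B = 0 → B * A = 0 := by
    intro A B hA hB h
    have h2 := congrArg star h
    rwa [star_mul, hA.star_eq, hB.star_eq, star_zero] at h2
  have h10' : P₁ * P₀ = 0 := hstar _ _ hP₀sa hP₁sa h01'
  have h20' : P₂ * P₀ = 0 := hstar _ _ hP₀sa hP₂sa h02'
  have h21' : P₂ * P₁ = 0 := hstar _ _ hP₁sa hP₂sa h12'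
  have hp : P₀ * P₀ = P₀ := hP₀idem
  have hp1 : P₁ * P₁ = P₁ := hP₁idem
  have hp2 : P₂ * P₂ = P₂ := hP₂idem
  have hq : (P₁ + P₂) * (P₁ + P₂) = P₁ + P₂ := by
    rw [mul_add, add_mul, add_mul, hp1, hp2, h12', h21']; abel
  have hpq : P₀ * (P₁ + P₂) = 0 := by rw [mul_add, h01', h02', add_zero]
  have hqp : (P₁ + P₂) * P₀ = 0 := by rw [add_mul, h10', h20', add_zero]
  have hpq1 : P₀ + (P₁ + P₂) = 1 := by rw [← add_assoc]; exact hsum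
  set w := z • (1 : E →L[ℂ] E) with hwdef
  have hzf : ∀ f : E →L[ℂ] E, z • f = w * f := fun f => by
    rw [hwdef, smul_mul_assoc, one_mul]
  have hwc : ∀ f : E →L[ℂ] E, f * w = w * f := fun f => by
    rw [hwdef, mul_smul_comm, smul_mul_assoc, one_mul, mul_one]
  have hM02' : P₀ * (M * P₂) = 0 := hM02
  have hM20' : P₂ * (M * P₀) = 0 := hM20
  -- hypotheses of the abstract Schur lemma
  have ha : P₀ * (P₀ * (M * P₀) - w * P₀) * P₀ = P₀ * (M * P₀) - w * P₀ := by
    rw [show P₀ * (P₀ * (M * P₀) - w * P₀) * P₀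
        = (P₀ * P₀) * (M * (P₀ * P₀)) - (P₀ * w) * (P₀ * P₀) from by noncomm_ring,
      hp, hwc, mul_assoc, hp]
  have hb : P₀ * (P₀ * (M * (P₁ + P₂))) * (P₁ + P₂) = P₀ * (M * (P₁ + P₂)) := by
    rw [show P₀ * (P₀ * (M * (P₁ + P₂))) * (P₁ + P₂)
        = (P₀ * P₀) * (M * ((P₁ + P₂) * (P₁ + P₂))) from by noncomm_ring, hp, hq]
  have hc : (P₁ + P₂) * ((P₁ + P₂) * (M * P₀)) * P₀ = (P₁ + P₂) * (M * P₀) := by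
    rw [show (P₁ + P₂) * ((P₁ + P₂) * (M * P₀)) * P₀
        = ((P₁ + P₂) * (P₁ + P₂)) * (M * (P₀ * P₀)) from by noncomm_ring, hp, hq]
  have hd : (P₁ + P₂) * ((P₁ + P₂) * (M * (P₁ + P₂)) - w * (P₁ + P₂)) * (P₁ + P₂)
      = (P₁ + P₂) * (M * (P₁ + P₂)) - w * (P₁ + P₂) := by
    rw [show (P₁ + P₂) * ((P₁ + P₂) * (M * (P₁ + P₂)) - w * (P₁ + P₂)) * (P₁ + P₂)
        = ((P₁ + P₂) * (P₁ + P₂)) * (M * ((P₁ + P₂) * (P₁ + P₂)))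
          - ((P₁ + P₂) * w) * ((P₁ + P₂) * (P₁ + P₂)) from by noncomm_ring,
      hq, hwc, mul_assoc, hq]
  have hr : (P₁ + P₂) * R2 * (P₁ + P₂) = R2 := hR2a
  have hrd : R2 * ((P₁ + P₂) * (M * (P₁ + P₂)) - w * (P₁ + P₂)) = P₁ + P₂ := by
    rw [← hzf]; exact hR2b
  have hdr : ((P₁ + P₂) * (M * (P₁ + P₂)) - w * (P₁ + P₂)) * R2 = P₁ + P₂ := by
    rw [← hzf]; exact hR2c
  have hs : P₀ * Rt * P₀ = Rt := hRta
  have hbrc : P₀ * (M * (P₁ + P₂)) * R2 * ((P₁ + P₂) * (M * P₀))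
      = (P₀ * (M * P₁)) * ((P₁ * (R2 * P₁)) * (P₁ * (M * P₀))) := by
    have hb1 : P₀ * (M * (P₁ + P₂)) = P₀ * (M * P₁) := by
      rw [mul_add, mul_add, hM02', add_zero]
    have hc1 : (P₁ + P₂) * (M * P₀) = P₁ * (M * P₀) := by
      rw [add_mul, hM20', add_zero]
    rw [hb1, hc1, show (P₀ * (M * P₁)) * ((P₁ * (R2 * P₁)) * (P₁ * (M * P₀)))
        = (P₀ * (M * (P₁ * P₁))) * R2 * ((P₁ * P₁) * (M * P₀)) from by noncomm_ring, hp1]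
  have hsS : Rt * (P₀ * (M * P₀) - w * P₀
      - P₀ * (M * (P₁ + P₂)) * R2 * ((P₁ + P₂) * (M * P₀))) = P₀ := by
    rw [hbrc, ← hzf]; exact hRtb
  have hSs : (P₀ * (M * P₀) - w * P₀
      - P₀ * (M * (P₁ + P₂)) * R2 * ((P₁ + P₂) * (M * P₀))) * Rt = P₀ := by
    rw [hbrc, ← hzf]; exact hRtc
  obtain ⟨key1, key2, key3⟩ := schur_ring P₀ (P₁ + P₂)
    (P₀ * (M * P₀) - w * P₀) (P₀ * (M * (P₁ + P₂))) ((P₁ + P₂) * (M * P₀))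
    ((P₁ + P₂) * (M * (P₁ + P₂)) - w * (P₁ + P₂)) R2 Rt
    hpq1 hp hq hpq hqp ha hb hc hd hr hrd hdr hs hsS hSs
  set N := Rt - Rt * (P₀ * (M * (P₁ + P₂))) * R2 - R2 * ((P₁ + P₂) * (M * P₀)) * Rt + R2
      + R2 * ((P₁ + P₂) * (M * P₀)) * Rt * (P₀ * (M * (P₁ + P₂))) * R2 with hN
  have habcd : M - w = (P₀ * (M * P₀) - w * P₀) + P₀ * (M * (P₁ + P₂))
      + (P₁ + P₂) * (M * P₀) + ((P₁ + P₂) * (M * (P₁ + P₂)) - w * (P₁ + P₂)) := by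
    have h1 : M - w = (P₀ + (P₁ + P₂)) * (M * (P₀ + (P₁ + P₂))) - w * (P₀ + (P₁ + P₂)) := by
      rw [hpq1, one_mul, mul_one, mul_one]
    rw [h1]; noncomm_ring
  have hMn : (M - w) * N = 1 := by rw [habcd]; exact key1
  have hnM : N * (M - w) = 1 := by rw [habcd]; exact key2
  refine ⟨⟨⟨M - w, N, hMn, hnM⟩, rfl⟩, ?_⟩
  have hinv : Ring.inverse (M - w) = N := Ring.inverse_unit ⟨M - w, N, hMn, hnM⟩
  rw [hinv]
  exact key3
end

section
/- Let K be a self-adjoint operator with 0 ≤ K ≤ (1 + k₀/N)·I, let E_λ denote its spectral projections, and let P be an orthogonal projection with ‖(1 − P)·E_{(1−c/(2W), ∞)}(K)‖ ≤ η. Then for any vector g, (K^{N−1}g, g) = (K^{N−1}Pg, Pg) + O(η‖g‖² + (1 − c/(2W))^{N−1}‖g‖²). In particular if N/W → ∞ and η‖g‖² → 0, the difference is o(1)·(1+k₀/N)^{N-1}. -/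
open ContinuousLinearMap


variable {E : Type} [NormedAddCommGroup E] [InnerProductSpace ℂ E] [CompleteSpace E]

lemma aux_norm_bound (K : E →L[ℂ] E) (hK : IsSelfAdjoint K)
    (hpos : ∀ x : E, 0 ≤ (inner ℂ (K x) x : ℂ).re)
    (S : Submodule ℂ E) (hinv : ∀ x ∈ S, K x ∈ S)
    (lam : ℝ) (hlam : 0 ≤ lam)
    (hb : ∀ x ∈ S, (inner ℂ (K x) x : ℂ).re ≤ lam * ‖x‖ ^ 2) :
    ∀ y ∈ S, ‖K y‖ ≤ lam * ‖y‖ := by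
  intro y hy
  by_cases hz : K y = 0
  · simp [hz]; positivity
  have hyne : y ≠ 0 := by rintro rfl; simp at hz
  set z := K y with hzdef
  have hzS : z ∈ S := hinv y hy
  set u : E := (‖z‖ : ℂ) • y + (‖y‖ : ℂ) • z with hu
  set v : E := (‖z‖ : ℂ) • y - (‖y‖ : ℂ) • z with hv
  have huS : u ∈ S := S.add_mem (S.smul_mem _ hy) (S.smul_mem _ hzS)
  have hvS : v ∈ S := S.sub_mem (S.smul_mem _ hy) (S.smul_mem _ hzS)
  have hsym := hK.isSymmetric
  have h1 : (inner ℂ (K u) u : ℂ) - (inner ℂ (K v) v : ℂ)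
      = 2 * ((inner ℂ ((‖z‖:ℂ) • K y) ((‖y‖:ℂ) • z) : ℂ)
           + (inner ℂ ((‖y‖:ℂ) • K z) ((‖z‖:ℂ) • y) : ℂ)) := by
    simp only [hu, hv, map_add, map_sub, map_smul, inner_add_left, inner_add_right,
      inner_sub_left, inner_sub_right]
    ring
  have hKzy : (inner ℂ (K z) y : ℂ) = inner ℂ z z := by
    have h := hsym z y
    simp only [ContinuousLinearMap.coe_coe] at h
    rw [h, ← hzdef]
  have hA : (inner ℂ ((‖z‖:ℂ) • K y) ((‖y‖:ℂ) • z) : ℂ) = ((‖z‖*‖y‖ : ℝ) : ℂ) * inner ℂ z z := by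
    rw [inner_smul_left, inner_smul_right, ← hzdef]
    simp [Complex.conj_ofReal]
    ring
  have hB : (inner ℂ ((‖y‖:ℂ) • K z) ((‖z‖:ℂ) • y) : ℂ) = ((‖y‖*‖z‖ : ℝ) : ℂ) * inner ℂ z z := by
    rw [inner_smul_left, inner_smul_right, hKzy]
    simp [Complex.conj_ofReal]
    ring
  have hzz : (inner ℂ z z : ℂ) = ((‖z‖ ^ 2 : ℝ) : ℂ) := by
    rw [inner_self_eq_norm_sq_to_K]; norm_cast
  have h2 : (inner ℂ (K u) u : ℂ) - (inner ℂ (K v) v : ℂ)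
      = ((4 * (‖y‖ * ‖z‖ ^ 2 * ‖z‖) : ℝ) : ℂ) := by
    rw [h1, hA, hB, hzz]; push_cast; ring
  have hid : (inner ℂ (K u) u : ℂ).re - (inner ℂ (K v) v : ℂ).re
      = 4 * (‖y‖ * ‖z‖ ^ 2 * ‖z‖) := by
    have h := congrArg Complex.re h2
    simp only [Complex.sub_re, Complex.ofReal_re] at h
    exact h
  have hun : ‖u‖ ≤ 2 * (‖y‖ * ‖z‖) := by
    calc ‖u‖ ≤ ‖(‖z‖ : ℂ) • y‖ + ‖(‖y‖ : ℂ) • z‖ := norm_add_le _ _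
    _ = 2 * (‖y‖ * ‖z‖) := by
        simp [norm_smul, abs_of_nonneg (norm_nonneg _)]
        ring
  have hQu : (inner ℂ (K u) u : ℂ).re ≤ lam * (2 * (‖y‖ * ‖z‖)) ^ 2 := by
    refine le_trans (hb u huS) ?_
    have : ‖u‖ ^ 2 ≤ (2 * (‖y‖ * ‖z‖)) ^ 2 := by
      apply pow_le_pow_left₀ (norm_nonneg _) hun
    nlinarith
  have hQv : 0 ≤ (inner ℂ (K v) v : ℂ).re := hpos v
  have hkey : 4 * (‖y‖ * ‖z‖ ^ 2 * ‖z‖) ≤ lam * (2 * (‖y‖ * ‖z‖)) ^ 2 := by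
    linarith [hid, hQu, hQv]
  have hzpos : 0 < ‖z‖ := norm_pos_iff.mpr hz
  have hypos : 0 < ‖y‖ := norm_pos_iff.mpr hyne
  nlinarith [hkey, hzpos, hypos, mul_pos hypos (mul_pos hzpos hzpos)]



lemma aux_pow_bound (K : E →L[ℂ] E) (S : Submodule ℂ E)
    (lam : ℝ) (hlam : 0 ≤ lam) (hb : ∀ x ∈ S, K x ∈ S ∧ ‖K x‖ ≤ lam * ‖x‖) (n : ℕ) :
    ∀ x ∈ S, (K ^ n) x ∈ S ∧ ‖(K ^ n) x‖ ≤ lam ^ n * ‖x‖ := by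
  induction n with
  | zero => intro x hx; simp [hx]
  | succ m ih =>
    intro x hx
    obtain ⟨h1, h2⟩ := ih x hx
    have happ : (K ^ (m + 1)) x = K ((K ^ m) x) := by
      rw [pow_succ']; rfl
    obtain ⟨h3, h4⟩ := hb _ h1
    refine ⟨by rwa [happ], ?_⟩
    rw [happ]
    calc ‖K ((K ^ m) x)‖ ≤ lam * ‖(K ^ m) x‖ := h4
    _ ≤ lam * (lam ^ m * ‖x‖) := by nlinarith [norm_nonneg ((K ^ m) x), pow_nonneg hlam m, norm_nonneg x]
    _ = lam ^ (m + 1) * ‖x‖ := by ring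
  
lemma aux_proj_contr (A : E →L[ℂ] E) (hA : IsSelfAdjoint A) (hA2 : A ∘L A = A) (g : E) :
    ‖A g‖ ≤ ‖g‖ := by
  by_cases h0 : A g = 0
  · simp [h0]
  have hsym := hA.isSymmetric
  have hAA : A (A g) = A g := by
    have := DFunLike.congr_fun hA2 g
    simpa using this
  have key : (inner ℂ (A g) (A g) : ℂ) = inner ℂ (A g) g := by
    have h := hsym (A g) g
    simp only [ContinuousLinearMap.coe_coe] at h
    rw [hAA] at h
    exact h.symm
  have h3 : ‖A g‖ ^ 2 ≤ ‖A g‖ * ‖g‖ := by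
    calc ‖A g‖ ^ 2 = ‖(inner ℂ (A g) (A g) : ℂ)‖ := by
          rw [inner_self_eq_norm_sq_to_K]
          rw [norm_pow, RCLike.norm_ofReal, abs_of_nonneg (norm_nonneg _)]
    _ = ‖(inner ℂ (A g) g : ℂ)‖ := by rw [key]
    _ ≤ ‖A g‖ * ‖g‖ := norm_inner_le_norm _ _
  have hpos : 0 < ‖A g‖ := norm_pos_iff.mpr h0
  nlinarith

lemma aux_split (A B : E →L[ℂ] E) (hB : IsSelfAdjoint B) (hB2 : ∀ x, B (B x) = B x)
    (hAB : ∀ x, A (B x) = B (A x)) (u : E) :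
    (inner ℂ (A u) u : ℂ)
      = inner ℂ (A (B u)) (B u) + inner ℂ (A (u - B u)) (u - B u) := by
  have hsym := hB.isSymmetric
  have h1 : (inner ℂ (A (B u)) (u - B u) : ℂ) = 0 := by
    rw [hAB]
    have h := hsym (A u) (u - B u)
    simp only [ContinuousLinearMap.coe_coe] at h
    rw [h, map_sub, hB2, sub_self, inner_zero_right]
  have h2 : (inner ℂ (A (u - B u)) (B u) : ℂ) = 0 := by
    have h := hsym (A (u - B u)) u
    simp only [ContinuousLinearMap.coe_coe] at h
    rw [← h, ← hAB, map_sub, hB2, sub_self, map_zero, inner_zero_left]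
  have hu : u = B u + (u - B u) := by abel
  calc (inner ℂ (A u) u : ℂ)
      = inner ℂ (A (B u + (u - B u))) (B u + (u - B u)) := by rw [← hu]
  _ = inner ℂ (A (B u)) (B u) + inner ℂ (A (u - B u)) (u - B u) := by
      simp only [map_add, inner_add_left, inner_add_right]
      rw [h1, h2]
      ring


lemma aux_comm_pow (K B : E →L[ℂ] E) (h : ∀ x, K (B x) = B (K x)) (n : ℕ) :
    ∀ x, (K ^ n) (B x) = B ((K ^ n) x) := by
  induction n with
  | zero => intro x; simp
  | succ m ih =>
    intro x
    have h1 : ∀ y : E, (K ^ (m + 1)) y = (K ^ m) (K y) := fun y => by rw [pow_succ]; rfl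
    rw [h1, h1, h, ih]



theorem stmt_13' (k₀ : ℝ) (hk₀ : 0 ≤ k₀)
    (K P Eproj : E →L[ℂ] E) (g : E) (N : ℕ) (c W η : ℝ)
    (hN : 1 ≤ N) (hc : 0 < c) (hW : 0 < W) (hcW : c / (2 * W) < 1) (hη : 0 ≤ η)
    (hKsa : IsSelfAdjoint K)
    (hKpos : ∀ x : E, 0 ≤ (inner ℂ (K x) x : ℂ).re)
    (hKub : ∀ x : E, (inner ℂ (K x) x : ℂ).re ≤ (1 + k₀ / N) * ‖x‖ ^ 2)
    (hPsa : IsSelfAdjoint P) (hP2 : P ∘L P = P)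
    (hEsa : IsSelfAdjoint Eproj) (hE2 : Eproj ∘L Eproj = Eproj)
    (hKE : K ∘L Eproj = Eproj ∘L K)
    (hlow : ∀ x : E, (inner ℂ (K ((1 - Eproj) x)) ((1 - Eproj) x) : ℂ).re
        ≤ (1 - c / (2 * W)) * ‖(1 - Eproj) x‖ ^ 2)
    (hPE : ‖(1 - P) ∘L Eproj‖ ≤ η) :
    ‖(inner ℂ (K ^ (N - 1) • g) g : ℂ) - (inner ℂ (K ^ (N - 1) • (P g)) (P g) : ℂ)‖
      ≤ (2 * Real.exp k₀ + 2) * (η * ‖g‖ ^ 2 + (1 - c / (2 * W)) ^ (N - 1) * ‖g‖ ^ 2) := by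
  set n := N - 1 with hn
  set lam := 1 - c / (2 * W) with hlamdef
  have hlam0 : 0 ≤ lam := by simp only [hlamdef]; linarith
  set μ := 1 + k₀ / N with hμdef
  have hNpos : (0:ℝ) < N := by exact_mod_cast Nat.lt_of_lt_of_le Nat.zero_lt_one hN
  have hμ1 : 1 ≤ μ := by
    have : 0 ≤ k₀ / N := div_nonneg hk₀ hNpos.le
    simp only [hμdef]; linarith
  have hμ0 : 0 ≤ μ := by linarith
  -- pointwise applications of defining identities
  have hEidem : ∀ x, Eproj (Eproj x) = Eproj x := fun x => by
    have := DFunLike.congr_fun hE2 x; simpa using this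
  have hKEapp : ∀ x, K (Eproj x) = Eproj (K x) := fun x => by
    have := DFunLike.congr_fun hKE x; simpa using this
  -- global norm bound ‖K x‖ ≤ μ ‖x‖ and powers
  have hKle : ∀ x ∈ (⊤ : Submodule ℂ E), K x ∈ (⊤ : Submodule ℂ E) ∧ ‖K x‖ ≤ μ * ‖x‖ := by
    intro x _
    exact ⟨trivial, aux_norm_bound K hKsa hKpos ⊤ (fun _ _ => trivial) μ hμ0
      (fun y _ => hKub y) x trivial⟩
  have hKpow : ∀ x : E, ‖(K ^ n) x‖ ≤ μ ^ n * ‖x‖ := fun x =>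
    (aux_pow_bound K ⊤ μ hμ0 hKle n x trivial).2
  -- the low subspace: kernel of Eproj
  set S : Submodule ℂ E := LinearMap.ker (Eproj : E →ₗ[ℂ] E) with hS
  have hmemS : ∀ x : E, x ∈ S ↔ Eproj x = 0 := fun x => LinearMap.mem_ker
  have hSinv : ∀ x ∈ S, K x ∈ S := by
    intro x hx
    rw [hmemS] at hx ⊢
    rw [← hKEapp, hx, map_zero]
  have hSfix : ∀ x ∈ S, (1 - Eproj) x = x := by
    intro x hx
    rw [hmemS] at hx
    simp [sub_apply, one_apply, hx]
  have hSb : ∀ x ∈ S, (inner ℂ (K x) x : ℂ).re ≤ lam * ‖x‖ ^ 2 := by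
    intro x hx
    have := hlow x
    rwa [hSfix x hx] at this
  have hSK : ∀ x ∈ S, K x ∈ S ∧ ‖K x‖ ≤ lam * ‖x‖ := fun x hx =>
    ⟨hSinv x hx, aux_norm_bound K hKsa hKpos S hSinv lam hlam0 hSb x hx⟩
  have hSpow : ∀ x ∈ S, ‖(K ^ n) x‖ ≤ lam ^ n * ‖x‖ := fun x hx =>
    (aux_pow_bound K S lam hlam0 hSK n x hx).2
  -- K^n commutes with Eproj
  have hKpowE : ∀ x, (K ^ n) (Eproj x) = Eproj ((K ^ n) x) :=
    aux_comm_pow K Eproj hKEapp n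
  -- contraction properties
  have h1Esa : IsSelfAdjoint (1 - Eproj : E →L[ℂ] E) := (IsSelfAdjoint.one (E →L[ℂ] E)).sub hEsa
  have h1E2 : (1 - Eproj : E →L[ℂ] E) ∘L (1 - Eproj) = 1 - Eproj := by
    ext x; simp [sub_apply, one_apply, hEidem]
  have hEcontr : ∀ x : E, ‖Eproj x‖ ≤ ‖x‖ := aux_proj_contr Eproj hEsa hE2
  have hPcontr : ∀ x : E, ‖P x‖ ≤ ‖x‖ := aux_proj_contr P hPsa hP2
  have h1Econtr : ∀ x : E, ‖x - Eproj x‖ ≤ ‖x‖ := by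
    intro x
    have := aux_proj_contr (1 - Eproj) h1Esa h1E2 x
    simpa [sub_apply, one_apply] using this
  -- norm of Eproj ∘ (1-P)
  have hEP : ‖Eproj ∘L (1 - P)‖ ≤ η := by
    have hstar : Eproj ∘L (1 - P) = star ((1 - P) ∘L Eproj) := by
      have : ((1 - P) ∘L Eproj) = (1 - P) * Eproj := rfl
      rw [this, star_mul, hEsa.star_eq]
      have : star (1 - P : E →L[ℂ] E) = 1 - P := by
        rw [star_sub, star_one, hPsa.star_eq]
      rw [this]
      rfl
    rw [hstar, norm_star]
    exact hPE
  have hdnorm : ‖Eproj g - Eproj (P g)‖ ≤ η * ‖g‖ := by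
    have h1 : Eproj g - Eproj (P g) = (Eproj ∘L (1 - P)) g := by
      simp [comp_apply, sub_apply, one_apply, map_sub]
    rw [h1]
    calc ‖(Eproj ∘L (1 - P)) g‖ ≤ ‖Eproj ∘L (1 - P)‖ * ‖g‖ := le_opNorm _ _
    _ ≤ η * ‖g‖ := by
        apply mul_le_mul_of_nonneg_right hEP (norm_nonneg _)
  -- split identities
  have hsplit : ∀ u : E, (inner ℂ ((K ^ n) u) u : ℂ)
      = inner ℂ ((K ^ n) (Eproj u)) (Eproj u)
        + inner ℂ ((K ^ n) (u - Eproj u)) (u - Eproj u) :=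
    aux_split (K ^ n) Eproj hEsa hEidem hKpowE
  -- the three pieces
  set a := Eproj g with ha
  set b := Eproj (P g) with hb
  set xg := g - Eproj g with hxg
  set xP := P g - Eproj (P g) with hxP
  have hxgS : xg ∈ S := by
    rw [hmemS, hxg, map_sub, hEidem, sub_self]
  have hxPS : xP ∈ S := by
    rw [hmemS, hxP, map_sub, hEidem, sub_self]
  have hbound_xg : ‖(inner ℂ ((K ^ n) xg) xg : ℂ)‖ ≤ lam ^ n * ‖g‖ ^ 2 := by
    calc ‖(inner ℂ ((K ^ n) xg) xg : ℂ)‖ ≤ ‖(K ^ n) xg‖ * ‖xg‖ := norm_inner_le_norm _ _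
    _ ≤ (lam ^ n * ‖xg‖) * ‖xg‖ := by
        apply mul_le_mul_of_nonneg_right (hSpow xg hxgS) (norm_nonneg _)
    _ ≤ (lam ^ n * ‖g‖) * ‖g‖ := by
        have h : ‖xg‖ ≤ ‖g‖ := h1Econtr g
        have hp : (0:ℝ) ≤ lam ^ n := pow_nonneg hlam0 n
        have h0 : (0:ℝ) ≤ ‖xg‖ := norm_nonneg _
        exact mul_le_mul (mul_le_mul_of_nonneg_left h hp) h h0
          (mul_nonneg hp (le_trans h0 h))
    _ = lam ^ n * ‖g‖ ^ 2 := by ring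
  have hbound_xP : ‖(inner ℂ ((K ^ n) xP) xP : ℂ)‖ ≤ lam ^ n * ‖g‖ ^ 2 := by
    calc ‖(inner ℂ ((K ^ n) xP) xP : ℂ)‖ ≤ ‖(K ^ n) xP‖ * ‖xP‖ := norm_inner_le_norm _ _
    _ ≤ (lam ^ n * ‖xP‖) * ‖xP‖ := by
        apply mul_le_mul_of_nonneg_right (hSpow xP hxPS) (norm_nonneg _)
    _ ≤ (lam ^ n * ‖g‖) * ‖g‖ := by
        have h1 : ‖xP‖ ≤ ‖P g‖ := h1Econtr (P g)
        have h2 := hPcontr g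
        have h : ‖xP‖ ≤ ‖g‖ := le_trans h1 h2
        have hp : (0:ℝ) ≤ lam ^ n := pow_nonneg hlam0 n
        have h0 : (0:ℝ) ≤ ‖xP‖ := norm_nonneg _
        exact mul_le_mul (mul_le_mul_of_nonneg_left h hp) h h0
          (mul_nonneg hp (le_trans h0 h))
    _ = lam ^ n * ‖g‖ ^ 2 := by ring
  have hbound_high : ‖(inner ℂ ((K ^ n) a) a : ℂ) - (inner ℂ ((K ^ n) b) b : ℂ)‖
      ≤ 2 * (μ ^ n * η) * ‖g‖ ^ 2 := by
    have hid : (inner ℂ ((K ^ n) a) a : ℂ) - (inner ℂ ((K ^ n) b) b : ℂ)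
        = inner ℂ ((K ^ n) a) (a - b) + inner ℂ ((K ^ n) (a - b)) b := by
      simp only [map_sub, inner_sub_left, inner_sub_right]
      ring
    rw [hid]
    have hab : ‖a - b‖ ≤ η * ‖g‖ := hdnorm
    have hag : ‖a‖ ≤ ‖g‖ := hEcontr g
    have hbg : ‖b‖ ≤ ‖g‖ := le_trans (hEcontr (P g)) (hPcontr g)
    have hμn0 : (0:ℝ) ≤ μ ^ n := pow_nonneg hμ0 n
    have n1 : ‖(K ^ n) a‖ ≤ μ ^ n * ‖g‖ :=
      le_trans (hKpow a) (mul_le_mul_of_nonneg_left hag hμn0)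
    have n2 : ‖(K ^ n) (a - b)‖ ≤ μ ^ n * (η * ‖g‖) :=
      le_trans (hKpow (a - b)) (mul_le_mul_of_nonneg_left hab hμn0)
    have t1a : ‖(inner ℂ ((K ^ n) a) (a - b) : ℂ)‖ ≤ (μ ^ n * ‖g‖) * (η * ‖g‖) :=
      le_trans (norm_inner_le_norm _ _)
        (mul_le_mul n1 hab (norm_nonneg _) (mul_nonneg hμn0 (norm_nonneg _)))
    have t1b : ‖(inner ℂ ((K ^ n) (a - b)) b : ℂ)‖ ≤ (μ ^ n * (η * ‖g‖)) * ‖g‖ :=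
      le_trans (norm_inner_le_norm _ _)
        (mul_le_mul n2 hbg (norm_nonneg _) (mul_nonneg hμn0 (mul_nonneg hη (norm_nonneg _))))
    calc ‖(inner ℂ ((K ^ n) a) (a - b) : ℂ) + (inner ℂ ((K ^ n) (a - b)) b : ℂ)‖
        ≤ ‖(inner ℂ ((K ^ n) a) (a - b) : ℂ)‖ + ‖(inner ℂ ((K ^ n) (a - b)) b : ℂ)‖ :=
          norm_add_le _ _
    _ ≤ (μ ^ n * ‖g‖) * (η * ‖g‖) + (μ ^ n * (η * ‖g‖)) * ‖g‖ := add_le_add t1a t1b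
    _ = 2 * (μ ^ n * η) * ‖g‖ ^ 2 := by ring
  -- assemble
  have hgoal : (inner ℂ (K ^ (N-1) • g) g : ℂ) - (inner ℂ (K ^ (N-1) • (P g)) (P g) : ℂ)
      = ((inner ℂ ((K ^ n) a) a : ℂ) - (inner ℂ ((K ^ n) b) b : ℂ))
        + (inner ℂ ((K ^ n) xg) xg : ℂ) - (inner ℂ ((K ^ n) xP) xP : ℂ) := by
    have e1 : (inner ℂ (K ^ (N-1) • g) g : ℂ) = inner ℂ ((K ^ n) g) g := rfl
    have e2 : (inner ℂ (K ^ (N-1) • (P g)) (P g) : ℂ) = inner ℂ ((K ^ n) (P g)) (P g) := rfl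
    rw [e1, e2, hsplit g, hsplit (P g)]
    ring
  rw [hgoal]
  have hμn : μ ^ n ≤ Real.exp k₀ := by
    have h1 : μ ^ n ≤ μ ^ N := pow_le_pow_right₀ hμ1 (Nat.sub_le N 1)
    have h2 : μ ≤ Real.exp (k₀ / N) := by
      have := Real.add_one_le_exp (k₀ / N)
      simp only [hμdef]; linarith
    have h3 : μ ^ N ≤ Real.exp (k₀ / N) ^ N := pow_le_pow_left₀ hμ0 h2 N
    have h4 : Real.exp (k₀ / N) ^ N = Real.exp k₀ := by
      rw [← Real.exp_nat_mul]
      congr 1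
      field_simp
    linarith
  calc ‖((inner ℂ ((K ^ n) a) a : ℂ) - (inner ℂ ((K ^ n) b) b : ℂ))
        + (inner ℂ ((K ^ n) xg) xg : ℂ) - (inner ℂ ((K ^ n) xP) xP : ℂ)‖
      ≤ ‖(inner ℂ ((K ^ n) a) a : ℂ) - (inner ℂ ((K ^ n) b) b : ℂ)‖
        + ‖(inner ℂ ((K ^ n) xg) xg : ℂ)‖ + ‖(inner ℂ ((K ^ n) xP) xP : ℂ)‖ := by
        apply le_trans (norm_sub_le _ _)
        gcongr
        exact norm_add_le _ _
  _ ≤ 2 * (μ ^ n * η) * ‖g‖ ^ 2 + lam ^ n * ‖g‖ ^ 2 + lam ^ n * ‖g‖ ^ 2 := by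
        gcongr
  _ ≤ (2 * Real.exp k₀ + 2) * (η * ‖g‖ ^ 2 + lam ^ n * ‖g‖ ^ 2) := by
        have hg2 : 0 ≤ ‖g‖ ^ 2 := sq_nonneg _
        have hexp : 1 ≤ Real.exp k₀ := by
          rw [← Real.exp_zero]
          exact Real.exp_le_exp.mpr hk₀
        have hlamn : 0 ≤ lam ^ n := pow_nonneg hlam0 n
        nlinarith [mul_nonneg hη hg2, mul_nonneg hlamn hg2,
          mul_le_mul_of_nonneg_right hμn (mul_nonneg hη hg2)]

/-- the spectral-splitting argument at the end of Lemma 3.1: let `K` be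
self-adjoint with `0 ≤ K ≤ (1 + k₀/N)`, `Eproj` its spectral projection onto
`(1 − c/(2W), ∞)` and `P` an orthogonal projection with `‖(1 − P)Eproj‖ ≤ η`.  Then
`(K^{N−1}g, g) = (K^{N−1}Pg, Pg) + O(η‖g‖² + (1 − c/(2W))^{N−1}‖g‖²)`, with a constant
depending only on `k₀`. -/
theorem stmt_13 :
    ∀ k₀ : ℝ, 0 ≤ k₀ →
    ∃ C : ℝ, 0 < C ∧
      ∀ (E : Type) (_ : NormedAddCommGroup E) (_ : InnerProductSpace ℂ E) (_ : CompleteSpace E),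
      ∀ (K P Eproj : E →L[ℂ] E) (g : E) (N : ℕ) (c W η : ℝ),
        1 ≤ N → 0 < c → 0 < W → c / (2 * W) < 1 → 0 ≤ η →
        IsSelfAdjoint K →
        (∀ x : E, 0 ≤ (inner ℂ (K x) x : ℂ).re) →
        (∀ x : E, (inner ℂ (K x) x : ℂ).re ≤ (1 + k₀ / N) * ‖x‖ ^ 2) →
        IsSelfAdjoint P → P ∘L P = P →
        -- `Eproj` is the spectral projection of `K` onto `(1 − c/(2W), ∞)`:
        IsSelfAdjoint Eproj → Eproj ∘L Eproj = Eproj → K ∘L Eproj = Eproj ∘L K →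
        (∀ x : E, (1 - c / (2 * W)) * ‖Eproj x‖ ^ 2
            ≤ (inner ℂ (K (Eproj x)) (Eproj x) : ℂ).re) →
        (∀ x : E, (inner ℂ (K ((1 - Eproj) x)) ((1 - Eproj) x) : ℂ).re
            ≤ (1 - c / (2 * W)) * ‖(1 - Eproj) x‖ ^ 2) →
        ‖(1 - P) ∘L Eproj‖ ≤ η →
        ‖(inner ℂ (K ^ (N - 1) • g) g : ℂ) - (inner ℂ (K ^ (N - 1) • (P g)) (P g) : ℂ)‖
          ≤ C * (η * ‖g‖ ^ 2 + (1 - c / (2 * W)) ^ (N - 1) * ‖g‖ ^ 2) := by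
  intro k₀ hk₀
  refine ⟨2 * Real.exp k₀ + 2, by positivity, ?_⟩
  intro E _ _ _ K P Eproj g N c W η hN hc hW hcW hη hKsa hKpos hKub hPsa hP2 hEsa hE2
    hKE _ hlow hPE
  exact stmt_13' k₀ hk₀ K P Eproj g N c W η hN hc hW hcW hη hKsa hKpos hKub hPsa hP2
    hEsa hE2 hKE hlow hPE
end

section
/- Let f(Q) = (1/2)(−Tr(QQ*) + log det 𝒬 + 2u²) where 𝒬 = [[ẑ, iQ],[iQ*, ẑ*]], ẑ = z·I₂, |z| < 1, u = (1 − |z|²)^{1/2}, and Q ranges over 2×2 complex matrices. Then f(Q) ≤ 0 with equality exactly on the set {Q = u·U : U ∈ U(2)}; i.e. the maximum of f over all 2×2 complex Q is attained precisely at Q = uU with U unitary. -/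
set_option maxHeartbeats 1000000

open Matrix

/-- The 4×4 supermatrix `𝒬 = [[ẑ, iQ], [iQ*, ẑ*]]` with `ẑ = z·I₂` (the case `ζ = 0` of
(1.8) of the paper). -/
noncomputable def calQ (z : ℂ) (Q : Matrix (Fin 2) (Fin 2) ℂ) :
    Matrix (Fin 2 ⊕ Fin 2) (Fin 2 ⊕ Fin 2) ℂ :=
  Matrix.fromBlocks (z • 1) (Complex.I • Q) (Complex.I • Qᴴ) ((starRingEnd ℂ) z • 1)

namespace Stmt19Aux

noncomputable def A0 (Q : Matrix (Fin 2) (Fin 2) ℂ) : ℝ :=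
  Complex.normSq (Q 0 0) + Complex.normSq (Q 0 1)

noncomputable def A1 (Q : Matrix (Fin 2) (Fin 2) ℂ) : ℝ :=
  Complex.normSq (Q 1 0) + Complex.normSq (Q 1 1)

noncomputable def Bc (Q : Matrix (Fin 2) (Fin 2) ℂ) : ℂ :=
  Q 0 0 * (starRingEnd ℂ) (Q 1 0) + Q 0 1 * (starRingEnd ℂ) (Q 1 1)

lemma det_calQ (z : ℂ) (Q : Matrix (Fin 2) (Fin 2) ℂ) :
    (calQ z Q).det =
      ((z * (starRingEnd ℂ) z + (Q 0 0 * (starRingEnd ℂ) (Q 0 0) + Q 0 1 * (starRingEnd ℂ) (Q 0 1))) *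
       (z * (starRingEnd ℂ) z + (Q 1 0 * (starRingEnd ℂ) (Q 1 0) + Q 1 1 * (starRingEnd ℂ) (Q 1 1))) -
       (Q 0 0 * (starRingEnd ℂ) (Q 1 0) + Q 0 1 * (starRingEnd ℂ) (Q 1 1)) *
       (starRingEnd ℂ) (Q 0 0 * (starRingEnd ℂ) (Q 1 0) + Q 0 1 * (starRingEnd ℂ) (Q 1 1))) := by
  have g0 : finSumFinEquiv (Sum.inl (0:Fin 2)) = (0 : Fin (2+2)) := rfl
  have g1 : finSumFinEquiv (Sum.inl (1:Fin 2)) = (1 : Fin (2+2)) := rfl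
  have g2 : finSumFinEquiv (Sum.inr (0:Fin 2)) = (2 : Fin (2+2)) := rfl
  have g3 : finSumFinEquiv (Sum.inr (1:Fin 2)) = (3 : Fin (2+2)) := rfl
  have hM : calQ z Q =
      (!![z, 0, Complex.I * Q 0 0, Complex.I * Q 0 1;
          0, z, Complex.I * Q 1 0, Complex.I * Q 1 1;
          Complex.I * (starRingEnd ℂ) (Q 0 0), Complex.I * (starRingEnd ℂ) (Q 1 0), (starRingEnd ℂ) z, 0;
          Complex.I * (starRingEnd ℂ) (Q 0 1), Complex.I * (starRingEnd ℂ) (Q 1 1), 0, (starRingEnd ℂ) z]).submatrix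
        finSumFinEquiv finSumFinEquiv := by
    ext (i | i) (j | j) <;> fin_cases i <;> fin_cases j <;>
      simp [calQ, Matrix.one_apply, conjTranspose_apply, g0, g1, g2, g3]
  rw [hM, Matrix.det_submatrix_equiv_self]
  simp [Matrix.det_succ_row_zero, Fin.sum_univ_succ]
  simp [show Fin.castSucc (2:Fin 3) = (2:Fin 4) from rfl,
    show Fin.succAbove (2:Fin 4) (2:Fin 3) = (3:Fin 4) from rfl,
    show Fin.succAbove (3:Fin 4) (2:Fin 3) = (2:Fin 4) from rfl]
  ring_nf
  simp only [Complex.I_pow_four, Complex.I_sq, mul_one]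
  ring

lemma det_calQ_re (z : ℂ) (Q : Matrix (Fin 2) (Fin 2) ℂ) :
    ((calQ z Q).det).re =
      (Complex.normSq z + A0 Q) * (Complex.normSq z + A1 Q) - Complex.normSq (Bc Q) := by
  have : (calQ z Q).det = (((Complex.normSq z + A0 Q) * (Complex.normSq z + A1 Q)
      - Complex.normSq (Bc Q) : ℝ) : ℂ) := by
    rw [det_calQ]
    rw [Complex.mul_conj, Complex.mul_conj, Complex.mul_conj, Complex.mul_conj, Complex.mul_conj,
      show (Q 0 0 * (starRingEnd ℂ) (Q 1 0) + Q 0 1 * (starRingEnd ℂ) (Q 1 1)) = Bc Q from rfl,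
      Complex.mul_conj]
    push_cast [A0, A1]
    try ring
  rw [this, Complex.ofReal_re]

lemma trace_re (Q : Matrix (Fin 2) (Fin 2) ℂ) :
    ((Q * Qᴴ).trace).re = A0 Q + A1 Q := by
  simp [Matrix.trace_fin_two, Matrix.mul_apply, Fin.sum_univ_two, conjTranspose_apply,
    Complex.mul_conj, A0, A1]
  try push_cast
  try ring

lemma entry00 (Q : Matrix (Fin 2) (Fin 2) ℂ) : (Q * Qᴴ) 0 0 = ((A0 Q : ℝ) : ℂ) := by
  simp [Matrix.mul_apply, Fin.sum_univ_two, conjTranspose_apply, Complex.mul_conj, A0]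
lemma entry11 (Q : Matrix (Fin 2) (Fin 2) ℂ) : (Q * Qᴴ) 1 1 = ((A1 Q : ℝ) : ℂ) := by
  simp [Matrix.mul_apply, Fin.sum_univ_two, conjTranspose_apply, Complex.mul_conj, A1]
lemma entry01 (Q : Matrix (Fin 2) (Fin 2) ℂ) : (Q * Qᴴ) 0 1 = Bc Q := by
  simp [Matrix.mul_apply, Fin.sum_univ_two, conjTranspose_apply, Bc]
lemma entry10 (Q : Matrix (Fin 2) (Fin 2) ℂ) : (Q * Qᴴ) 1 0 = (starRingEnd ℂ) (Bc Q) := by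
  simp [Matrix.mul_apply, Fin.sum_univ_two, conjTranspose_apply, Bc]
  ring

/-- the key real inequality -/
lemma key_le (a x y b u : ℝ) (ha0 : 0 ≤ a) (hu2 : u ^ 2 = 1 - a)
    (hx : 0 ≤ x) (hy : 0 ≤ y) (hb : 0 ≤ b)
    (hP : 0 < (a + x) * (a + y) - b) :
    Real.log ((a + x) * (a + y) - b) ≤ (x + y) - 2 * u ^ 2 := by
  set s : ℝ := a + (x + y) / 2 with hs
  have hPs : (a + x) * (a + y) - b ≤ s ^ 2 := by rw [hs]; nlinarith [sq_nonneg (x - y)]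
  have hsnn : 0 ≤ s := by rw [hs]; linarith
  have hs0 : 0 < s := by
    rcases hsnn.lt_or_eq with h | h
    · exact h
    · exfalso
      rw [← h] at hPs
      simp at hPs
      linarith
  calc Real.log ((a + x) * (a + y) - b) ≤ Real.log (s ^ 2) :=
        (Real.log_le_log_iff hP (by positivity)).mpr hPs
    _ = 2 * Real.log s := by rw [Real.log_pow]; push_cast; ring
    _ ≤ 2 * (s - 1) := by nlinarith [Real.log_le_sub_one_of_pos hs0]
    _ = (x + y) - 2 * u ^ 2 := by rw [hu2]; ring

lemma key_eq (a x y b u : ℝ) (ha0 : 0 ≤ a) (hu2 : u ^ 2 = 1 - a)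
    (hx : 0 ≤ x) (hy : 0 ≤ y) (hb : 0 ≤ b)
    (hP : 0 < (a + x) * (a + y) - b)
    (hlog : Real.log ((a + x) * (a + y) - b) = (x + y) - 2 * u ^ 2) :
    x = u ^ 2 ∧ y = u ^ 2 ∧ b = 0 := by
  set s : ℝ := a + (x + y) / 2 with hs
  have hPs : (a + x) * (a + y) - b ≤ s ^ 2 := by rw [hs]; nlinarith [sq_nonneg (x - y)]
  have hsnn : 0 ≤ s := by rw [hs]; linarith
  have hs0 : 0 < s := by
    rcases hsnn.lt_or_eq with h | h
    · exact h
    · exfalso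
      rw [← h] at hPs
      simp at hPs
      linarith
  have hlog1 : Real.log ((a + x) * (a + y) - b) ≤ 2 * Real.log s := by
    calc Real.log ((a + x) * (a + y) - b) ≤ Real.log (s ^ 2) :=
          (Real.log_le_log_iff hP (by positivity)).mpr hPs
      _ = 2 * Real.log s := by rw [Real.log_pow]; push_cast; ring
  have hse : s = 1 := by
    by_contra hne
    have h1 : Real.log s < s - 1 := Real.log_lt_sub_one_of_pos hs0 hne
    have h2 : Real.log ((a + x) * (a + y) - b) < (x + y) - 2 * u ^ 2 := by
      calc Real.log ((a + x) * (a + y) - b) ≤ 2 * Real.log s := hlog1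
        _ < 2 * (s - 1) := by linarith
        _ = (x + y) - 2 * u ^ 2 := by rw [hs, hu2]; ring
    rw [hlog] at h2
    exact lt_irrefl _ h2
  rw [hs] at hse
  have hxy : x + y = 2 * u ^ 2 := by rw [hu2]; linarith
  have hlogP : Real.log ((a + x) * (a + y) - b) = 0 := by rw [hlog, hxy]; ring
  have hP1 : (a + x) * (a + y) - b = 1 := by
    rcases lt_trichotomy ((a + x) * (a + y) - b) 1 with h | h | h
    · have h3 := Real.log_lt_log hP h
      rw [Real.log_one, hlogP] at h3
      exact absurd h3 (lt_irrefl 0)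
    · exact h
    · have h3 := Real.log_lt_log one_pos h
      rw [Real.log_one, hlogP] at h3
      exact absurd h3 (lt_irrefl 0)
  have hsum : (a + x) + (a + y) = 2 := by linarith
  have hb0 : b = 0 := le_antisymm (by nlinarith [sq_nonneg (a + y - 1)]) hb
  have hxe : a + x = 1 := by nlinarith [sq_nonneg (a + x - 1), sq_nonneg (a + y - 1)]
  have hye : a + y = 1 := by linarith
  exact ⟨by linarith, by linarith, hb0⟩

end Stmt19Aux

open Stmt19Aux in
/-- the saddle-point statement after Lemma 2.2: for `|z| < 1`,
`u = (1 − |z|²)^{1/2}` and `f(Q) = ½(−Tr QQ* + log det 𝒬 + 2u²)`, one has `f(Q) ≤ 0` with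
equality exactly on the set `{Q = u·U : U ∈ U(2)}`. -/
theorem stmt_19 (z : ℂ) (hz : ‖z‖ < 1)
    (u : ℝ) (hu : u = Real.sqrt (1 - ‖z‖ ^ 2))
    (f : Matrix (Fin 2) (Fin 2) ℂ → ℝ)
    (hf : ∀ Q, f Q = (1 / 2) *
      (-(Q * Qᴴ).trace.re + Real.log ((calQ z Q).det).re + 2 * u ^ 2)) :
    (∀ Q : Matrix (Fin 2) (Fin 2) ℂ, 0 < ((calQ z Q).det).re → f Q ≤ 0) ∧
    (∀ Q : Matrix (Fin 2) (Fin 2) ℂ,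
      (0 < ((calQ z Q).det).re ∧ f Q = 0) ↔
        ∃ U : Matrix (Fin 2) (Fin 2) ℂ,
          U ∈ Matrix.unitaryGroup (Fin 2) ℂ ∧ Q = (u : ℂ) • U) := by
  have ha0 : 0 ≤ Complex.normSq z := Complex.normSq_nonneg z
  have ha1 : Complex.normSq z < 1 := by
    rw [← Complex.sq_norm]
    nlinarith [norm_nonneg z]
  have hu2 : u ^ 2 = 1 - Complex.normSq z := by
    rw [hu, Real.sq_sqrt (by rw [Complex.sq_norm]; linarith), Complex.sq_norm]
  have hupos : 0 < u := by
    rw [hu]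
    apply Real.sqrt_pos.mpr
    rw [Complex.sq_norm]; linarith
  have hune : (u : ℂ) ≠ 0 := by exact_mod_cast hupos.ne'
  constructor
  · intro Q hdet
    rw [det_calQ_re] at hdet
    have hA0 : 0 ≤ A0 Q := add_nonneg (Complex.normSq_nonneg _) (Complex.normSq_nonneg _)
    have hA1 : 0 ≤ A1 Q := add_nonneg (Complex.normSq_nonneg _) (Complex.normSq_nonneg _)
    have hle := key_le (Complex.normSq z) (A0 Q) (A1 Q) (Complex.normSq (Bc Q)) u ha0 hu2
      hA0 hA1 (Complex.normSq_nonneg _) hdet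
    rw [hf, trace_re, det_calQ_re]
    linarith
  · intro Q
    constructor
    · rintro ⟨hdet, hfeq⟩
      rw [det_calQ_re] at hdet
      rw [hf, trace_re, det_calQ_re] at hfeq
      have hA0 : 0 ≤ A0 Q := add_nonneg (Complex.normSq_nonneg _) (Complex.normSq_nonneg _)
      have hA1 : 0 ≤ A1 Q := add_nonneg (Complex.normSq_nonneg _) (Complex.normSq_nonneg _)
      have hlog : Real.log ((Complex.normSq z + A0 Q) * (Complex.normSq z + A1 Q)
          - Complex.normSq (Bc Q)) = (A0 Q + A1 Q) - 2 * u ^ 2 := by linarith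
      obtain ⟨h0, h1, hb⟩ := key_eq (Complex.normSq z) (A0 Q) (A1 Q)
        (Complex.normSq (Bc Q)) u ha0 hu2 hA0 hA1 (Complex.normSq_nonneg _) hdet hlog
      have hB0 : Bc Q = 0 := Complex.normSq_eq_zero.mp hb
      have hQQ : Q * Qᴴ = ((u ^ 2 : ℝ) : ℂ) • 1 := by
        rw [Matrix.eta_fin_two (Q * Qᴴ), entry00, entry01, entry10, entry11, h0, h1, hB0,
          Matrix.one_fin_two]
        rw [map_zero]
        ext i j
        fin_cases i <;> fin_cases j <;> simp
      have hstar : star ((u:ℂ)⁻¹) = (u:ℂ)⁻¹ := by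
        rw [star_inv₀]
        norm_cast
        simp [Complex.star_def, Complex.conj_ofReal]
      refine ⟨((u : ℂ))⁻¹ • Q, ?_, ?_⟩
      · rw [Matrix.mem_unitaryGroup_iff, Matrix.star_eq_conjTranspose,
          Matrix.conjTranspose_smul, Matrix.smul_mul, Matrix.mul_smul, hQQ,
          smul_smul, smul_smul, hstar]
        rw [show (u:ℂ)⁻¹ * (u:ℂ)⁻¹ * ((u ^ 2 : ℝ) : ℂ) = 1 by
          push_cast; field_simp]
        exact one_smul _ _
      · rw [smul_smul, mul_inv_cancel₀ hune, one_smul]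
    · rintro ⟨U, hU, rfl⟩
      have hUU : U * star U = 1 := Matrix.mem_unitaryGroup_iff.mp hU
      have hustar : star ((u:ℂ)) = (u:ℂ) := by simp [Complex.star_def, Complex.conj_ofReal]
      have hQQ : ((u:ℂ) • U) * ((u:ℂ) • U)ᴴ = ((u ^ 2 : ℝ) : ℂ) • 1 := by
        rw [Matrix.conjTranspose_smul, Matrix.smul_mul, Matrix.mul_smul,
          show Uᴴ = star U from rfl, hUU, smul_smul, hustar]
        congr 1
        push_cast
        ring
      have h0 : A0 ((u:ℂ) • U) = u ^ 2 := by
        have h := entry00 ((u:ℂ) • U)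
        rw [hQQ] at h
        simp [Matrix.smul_apply, Matrix.one_apply] at h
        exact_mod_cast h.symm
      have h1 : A1 ((u:ℂ) • U) = u ^ 2 := by
        have h := entry11 ((u:ℂ) • U)
        rw [hQQ] at h
        simp [Matrix.smul_apply, Matrix.one_apply] at h
        exact_mod_cast h.symm
      have hB : Bc ((u:ℂ) • U) = 0 := by
        have h := entry01 ((u:ℂ) • U)
        rw [hQQ] at h
        simp [Matrix.smul_apply, Matrix.one_apply] at h
        exact h.symm
      have hdet : ((calQ z ((u:ℂ) • U)).det).re = 1 := by
        rw [det_calQ_re, h0, h1, hB]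
        simp only [Complex.normSq_zero]
        nlinarith [hu2]
      refine ⟨by rw [hdet]; norm_num, ?_⟩
      rw [hf, trace_re, hdet, Real.log_one, h0, h1]
      ring
end
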